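/- arXiv:1611.06268 — 6 statements merged into one kernel-verified Lean document; each statement's English description precedes it below -/
import Mathlib

section
/- Let κ be an infinite cardinal. Every initially κ-compact topological space that admits a quasi-G_κ-diagonal sequence is compact. -/
open Set Cardinal

universe u

/-- The star of a family `𝒪` of subsets about a set `A`:
`st(A, 𝒪) = ⋃ {O ∈ 𝒪 : O ∩ A ≠ ∅}`. -/
def SetStar {X : Type u} (A : Set X) (𝒪 : Set (Set X)) : Set X :=
  ⋃₀ {O | O ∈ 𝒪 ∧ (O ∩ A).Nonempty}

/-- `X` is initially `κ`-compact: every open cover of cardinality at most `κ`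
has a finite subcover. -/
def InitiallyCompact (X : Type u) [TopologicalSpace X] (κ : Cardinal.{u}) : Prop :=
  ∀ 𝒞 : Set (Set X), (∀ U ∈ 𝒞, IsOpen U) → ⋃₀ 𝒞 = Set.univ → #𝒞 ≤ κ →
    ∃ F ⊆ 𝒞, F.Finite ∧ ⋃₀ F = Set.univ

/-- `{𝒪_α : α < κ}` is a quasi-`G_κ`-diagonal sequence for `X`: each `𝒪_α` is a
collection of open subsets of `X`, and for all distinct `x, y ∈ X` there is `α < κ`
with `x ∈ ⋃ 𝒪_α` and `y ∉ st(x, 𝒪_α)`. -/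
def IsQuasiGDiagonalSeq {X : Type u} [TopologicalSpace X] (κ : Cardinal.{u})
    (𝒪 : κ.ord.ToType → Set (Set X)) : Prop :=
  (∀ α, ∀ O ∈ 𝒪 α, IsOpen O) ∧
    ∀ x y : X, x ≠ y → ∃ α, x ∈ ⋃₀ 𝒪 α ∧ y ∉ SetStar {x} (𝒪 α)

/- ### Auxiliary lemmas -/

/-- From initial `κ`-compactness: a family of at most `κ` closed sets with the finite
intersection property has nonempty intersection. -/
private lemma sInter_nonempty_of_fip {X : Type u} [TopologicalSpace X] {κ : Cardinal.{u}}
    (hX : InitiallyCompact X κ) {𝒮 : Set (Set X)} (hcl : ∀ C ∈ 𝒮, IsClosed C)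
    (hfip : ∀ u ⊆ 𝒮, u.Finite → (⋂₀ u).Nonempty) (hcard : #𝒮 ≤ κ) :
    (⋂₀ 𝒮).Nonempty := by
  by_contra h
  rw [Set.not_nonempty_iff_eq_empty] at h
  have hcov : ⋃₀ (compl '' 𝒮) = (Set.univ : Set X) := by
    ext x
    simp only [Set.mem_sUnion, Set.mem_image, Set.mem_univ, iff_true]
    have hx : x ∉ ⋂₀ 𝒮 := by rw [h]; exact Set.notMem_empty x
    rw [Set.mem_sInter] at hx
    push_neg at hx
    obtain ⟨C, hC, hxC⟩ := hx
    exact ⟨Cᶜ, ⟨C, hC, rfl⟩, hxC⟩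
  obtain ⟨F, hF𝒞, hFfin, hFcov⟩ := hX (compl '' 𝒮)
    (by rintro U ⟨C, hC, rfl⟩; exact (hcl C hC).isOpen_compl) hcov
    (Cardinal.mk_image_le.trans hcard)
  have hsubF : compl '' F ⊆ 𝒮 := by
    rintro E ⟨C, hCF, rfl⟩
    obtain ⟨D, hD, rfl⟩ := hF𝒞 hCF
    rwa [compl_compl]
  obtain ⟨y, hy⟩ := hfip (compl '' F) hsubF (hFfin.image _)
  have hynot : y ∉ ⋃₀ F := by
    rintro ⟨C, hCF, hyC⟩
    exact (Set.mem_sInter.mp hy Cᶜ ⟨C, hCF, rfl⟩) hyC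
  rw [hFcov] at hynot
  exact hynot (Set.mem_univ y)

/-- In a chain of families, every finite subset of the union is contained in one member. -/
private lemma chain_contains_finite {β : Type u} {c : Set (Set β)}
    (hchain : IsChain (· ⊆ ·) c) (hcne : c.Nonempty) {u : Set β} (hufin : u.Finite)
    (hu : u ⊆ ⋃₀ c) : ∃ 𝒢 ∈ c, u ⊆ 𝒢 := by
  refine Set.Finite.induction_on (motive := fun u _ => u ⊆ ⋃₀ c → ∃ 𝒢 ∈ c, u ⊆ 𝒢) _ hufin ?_ ?_ hu
  · intro _
    obtain ⟨𝒢, h𝒢⟩ := hcne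
    exact ⟨𝒢, h𝒢, Set.empty_subset _⟩
  · intro a s _ _ ih hsub
    obtain ⟨𝒢₁, h𝒢₁c, hu𝒢₁⟩ := ih fun y hy => hsub (Set.mem_insert_of_mem _ hy)
    obtain ⟨𝒢₂, h𝒢₂c, ha𝒢₂⟩ := hsub (Set.mem_insert _ _)
    rcases eq_or_ne 𝒢₁ 𝒢₂ with rfl | hne
    · exact ⟨𝒢₁, h𝒢₁c, Set.insert_subset ha𝒢₂ hu𝒢₁⟩
    · rcases hchain h𝒢₁c h𝒢₂c hne with h12 | h21
      · exact ⟨𝒢₂, h𝒢₂c, Set.insert_subset ha𝒢₂ (hu𝒢₁.trans h12)⟩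
      · exact ⟨𝒢₁, h𝒢₁c, Set.insert_subset (h21 ha𝒢₂) hu𝒢₁⟩

/-- Cardinality bound for unions indexed by `κ.ord.toType`. -/
private lemma mk_iUnion_le_kappa {α : Type u} {κ : Cardinal.{u}} (hκ : ℵ₀ ≤ κ)
    (f : κ.ord.ToType → Set α) (hf : ∀ γ, #(f γ) ≤ κ) : #(⋃ γ, f γ) ≤ κ := by
  refine le_trans Cardinal.mk_iUnion_le_sum_mk ?_
  refine le_trans (Cardinal.sum_le_sum _ (fun _ => κ) hf) ?_
  rw [Cardinal.sum_const']
  rw [Cardinal.mk_toType, Cardinal.card_ord]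
  exact le_of_eq (Cardinal.mul_eq_self hκ)


/-- Existence of a maximal family of closed sets with the finite intersection property
extending a given one. -/
private lemma exists_maximal_closed_fip {X : Type u} [TopologicalSpace X]
    {𝒜 : Set (Set X)} (h𝒜cl : ∀ C ∈ 𝒜, IsClosed C)
    (h𝒜fip : ∀ u ⊆ 𝒜, u.Finite → (⋂₀ u).Nonempty) :
    ∃ ℱ : Set (Set X), 𝒜 ⊆ ℱ ∧ (∀ C ∈ ℱ, IsClosed C) ∧
      (∀ u ⊆ ℱ, u.Finite → (⋂₀ u).Nonempty) ∧
      (∀ 𝒢 : Set (Set X), ((∀ C ∈ 𝒢, IsClosed C) ∧ ∀ u ⊆ 𝒢, u.Finite → (⋂₀ u).Nonempty) →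
        ℱ ⊆ 𝒢 → 𝒢 ⊆ ℱ) := by
  have hchaincond : ∀ c ⊆ {𝒢 : Set (Set X) |
      (∀ C ∈ 𝒢, IsClosed C) ∧ ∀ u ⊆ 𝒢, u.Finite → (⋂₀ u).Nonempty},
      IsChain (· ⊆ ·) c → c.Nonempty →
      ∃ ub ∈ {𝒢 : Set (Set X) | (∀ C ∈ 𝒢, IsClosed C) ∧ ∀ u ⊆ 𝒢, u.Finite → (⋂₀ u).Nonempty},
        ∀ s ∈ c, s ⊆ ub := by
    intro c hcS hchain hcne
    refine ⟨⋃₀ c, ⟨?_, ?_⟩, fun s hs => Set.subset_sUnion_of_mem hs⟩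
    · rintro C ⟨𝒢, h𝒢c, hC⟩
      exact (hcS h𝒢c).1 C hC
    · intro u hu hufin
      obtain ⟨𝒢, h𝒢c, hu𝒢⟩ := chain_contains_finite hchain hcne hufin hu
      exact (hcS h𝒢c).2 u hu𝒢 hufin
  obtain ⟨m, hsub, hmax⟩ := zorn_subset_nonempty
    {𝒢 : Set (Set X) | (∀ C ∈ 𝒢, IsClosed C) ∧ ∀ u ⊆ 𝒢, u.Finite → (⋂₀ u).Nonempty}
    hchaincond 𝒜 ⟨h𝒜cl, h𝒜fip⟩
  exact ⟨m, hsub, hmax.1.1, hmax.1.2, fun 𝒢 h𝒢 hle => hmax.2 h𝒢 hle⟩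

/-- The key fact: for every point `x` there is a colour `γ` such that `x` is in the domain
of the `γ`-th family and the star of `x` in that family misses the intersection of a
subfamily of `ℱ` of size at most `κ`. -/
private lemma phi_fact {X : Type u} [TopologicalSpace X] {κ : Cardinal.{u}}
    (hκ : ℵ₀ ≤ κ) (hX : InitiallyCompact X κ)
    {𝒪 : κ.ord.ToType → Set (Set X)} (h𝒪 : IsQuasiGDiagonalSeq κ 𝒪)
    {ℱ : Set (Set X)} (hcl : ∀ C ∈ ℱ, IsClosed C)
    (hfip : ∀ u ⊆ ℱ, u.Finite → (⋂₀ u).Nonempty)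
    (hempty : ⋂₀ ℱ = ∅)
    (hdich : ∀ C : Set X, IsClosed C → C ∉ ℱ → ∃ u, u ⊆ ℱ ∧ #u ≤ κ ∧ C ∩ ⋂₀ u = ∅)
    (x : X) :
    ∃ γ, x ∈ ⋃₀ 𝒪 γ ∧ ∃ 𝒲, 𝒲 ⊆ ℱ ∧ #𝒲 ≤ κ ∧ SetStar {x} (𝒪 γ) ∩ ⋂₀ 𝒲 = ∅ := by
  classical
  have hκfam : ∀ 𝒮 : Set (Set X), 𝒮 ⊆ ℱ → #𝒮 ≤ κ → (⋂₀ 𝒮).Nonempty := by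
    intro 𝒮 h1 h2
    exact sInter_nonempty_of_fip hX (fun C hC => hcl C (h1 hC))
      (fun u hu hufin => hfip u (hu.trans h1) hufin) h2
  obtain ⟨F₀, hF₀, hxF₀⟩ : ∃ F ∈ ℱ, x ∉ F := by
    by_contra h
    push_neg at h
    have hx : x ∈ ⋂₀ ℱ := fun F hF => h F hF
    rw [hempty] at hx
    exact hx
  by_cases hc : ∃ γ, x ∈ ⋃₀ 𝒪 γ ∧ (SetStar {x} (𝒪 γ))ᶜ ∈ ℱ
  · obtain ⟨γ, hdom, hcompl⟩ := hc
    refine ⟨γ, hdom, {(SetStar {x} (𝒪 γ))ᶜ}, by simpa using hcompl, ?_, ?_⟩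
    · rw [Cardinal.mk_singleton]
      exact le_trans Cardinal.one_le_aleph0 hκ
    · rw [Set.sInter_singleton]
      exact Set.inter_compl_self _
  · exfalso
    push_neg at hc
    have hW : ∀ γ : κ.ord.ToType, ∃ 𝒲, 𝒲 ⊆ ℱ ∧ #𝒲 ≤ κ ∧
        (x ∈ ⋃₀ 𝒪 γ → (SetStar {x} (𝒪 γ))ᶜ ∩ ⋂₀ 𝒲 = ∅) := by
      intro γ
      by_cases hdom : x ∈ ⋃₀ 𝒪 γ
      · have hclosed : IsClosed (SetStar {x} (𝒪 γ))ᶜ := by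
          apply IsOpen.isClosed_compl
          apply isOpen_sUnion
          rintro O ⟨hO, -⟩
          exact h𝒪.1 γ O hO
        obtain ⟨u, hu1, hu2, hu3⟩ := hdich _ hclosed (hc γ hdom)
        exact ⟨u, hu1, hu2, fun _ => hu3⟩
      · exact ⟨∅, Set.empty_subset _, by simp, fun h => absurd h hdom⟩
    choose W hW1 hW2 hW3 using hW
    set BIG : Set (Set X) := ({F₀} : Set (Set X)) ∪ ⋃ γ, W γ with hBIG
    have hsub : BIG ⊆ ℱ := by
      rintro C (hC | hC)
      · rw [Set.mem_singleton_iff] at hC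
        exact hC ▸ hF₀
      · obtain ⟨s, ⟨γ, rfl⟩, hC⟩ := hC
        exact hW1 γ hC
    have hcard : #BIG ≤ κ := by
      rw [hBIG]
      refine le_trans (Cardinal.mk_union_le _ _) ?_
      have h1 : #({F₀} : Set (Set X)) ≤ κ := by
        rw [Cardinal.mk_singleton]
        exact le_trans Cardinal.one_le_aleph0 hκ
      have h2 : #(⋃ γ, W γ) ≤ κ := mk_iUnion_le_kappa hκ W hW2
      calc #({F₀} : Set (Set X)) + #(⋃ γ, W γ) ≤ κ + κ := add_le_add h1 h2
        _ = κ := Cardinal.add_eq_self hκ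
    obtain ⟨z, hz⟩ := hκfam _ hsub hcard
    have hzF₀ : z ∈ F₀ := hz F₀ (Or.inl rfl)
    have hzx : x ≠ z := fun h => hxF₀ (h ▸ hzF₀)
    obtain ⟨γ, hdom, hst⟩ := h𝒪.2 x z hzx
    have h1 : z ∈ ⋂₀ W γ := fun C hC => hz C (Or.inr (Set.mem_iUnion.mpr ⟨γ, hC⟩))
    have h2 : z ∈ (SetStar {x} (𝒪 γ))ᶜ ∩ ⋂₀ W γ := ⟨hst, h1⟩
    rw [hW3 γ hdom] at h2
    exact h2

/-- The kill lemma: if a subfamily of `ℱ` of size at most `κ` has intersection inside the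
domain `⋃₀ 𝒪 c`, then the set of points whose `c`-star misses a `≤ κ` intersection of
members of `ℱ` is itself disjoint from some `≤ κ` intersection of members of `ℱ`. -/
private lemma claimC {X : Type u} [TopologicalSpace X] {κ : Cardinal.{u}}
    (hκ : ℵ₀ ≤ κ) (hX : InitiallyCompact X κ)
    {𝒪 : κ.ord.ToType → Set (Set X)} (h𝒪 : IsQuasiGDiagonalSeq κ 𝒪)
    {ℱ : Set (Set X)} (hcl : ∀ C ∈ ℱ, IsClosed C)
    (hfip : ∀ u ⊆ ℱ, u.Finite → (⋂₀ u).Nonempty)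
    (c : κ.ord.ToType) (𝒮c : Set (Set X)) (h𝒮1 : 𝒮c ⊆ ℱ) (h𝒮2 : #𝒮c ≤ κ)
    (h𝒮3 : ⋂₀ 𝒮c ⊆ ⋃₀ 𝒪 c) :
    ∃ 𝒯, 𝒯 ⊆ ℱ ∧ #𝒯 ≤ κ ∧
      {x : X | ∃ 𝒲, 𝒲 ⊆ ℱ ∧ #𝒲 ≤ κ ∧ SetStar {x} (𝒪 c) ∩ ⋂₀ 𝒲 = ∅} ∩ ⋂₀ 𝒯 = ∅ := by
  classical
  by_contra hcon
  push_neg at hcon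
  set G : Set X := {x : X | ∃ 𝒲, 𝒲 ⊆ ℱ ∧ #𝒲 ≤ κ ∧ SetStar {x} (𝒪 c) ∩ ⋂₀ 𝒲 = ∅} with hG
  have hpos : ∀ 𝒯 : Set (Set X), 𝒯 ⊆ ℱ → #𝒯 ≤ κ → (G ∩ ⋂₀ 𝒯).Nonempty := by
    intro 𝒯 h1 h2
    exact hcon 𝒯 h1 h2
  -- witness function for elements of G
  have hWex : ∀ x : X, ∃ 𝒲, 𝒲 ⊆ ℱ ∧ #𝒲 ≤ κ ∧
      (x ∈ G → SetStar {x} (𝒪 c) ∩ ⋂₀ 𝒲 = ∅) := by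
    intro x
    by_cases hx : x ∈ G
    · obtain ⟨𝒲, h1, h2, h3⟩ := hx
      exact ⟨𝒲, h1, h2, fun _ => h3⟩
    · exact ⟨∅, Set.empty_subset _, by simp, fun h => absurd h hx⟩
  choose W hW1 hW2 hW3 using hWex
  -- pick function
  have hpick : ∀ 𝒯 : Set (Set X), ∃ y : X, 𝒯 ⊆ ℱ → #𝒯 ≤ κ → y ∈ G ∩ ⋂₀ 𝒯 := by
    intro 𝒯
    by_cases h : 𝒯 ⊆ ℱ ∧ #𝒯 ≤ κ
    · obtain ⟨y, hy⟩ := hpos 𝒯 h.1 h.2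
      exact ⟨y, fun _ _ => hy⟩
    · obtain ⟨y, -⟩ := hfip ∅ (Set.empty_subset _) Set.finite_empty
      exact ⟨y, fun h1 h2 => absurd ⟨h1, h2⟩ h⟩
  choose pick hpick' using hpick
  -- the recursively defined families
  obtain ⟨Fam, hFam0, hFamS⟩ : ∃ Fam : ℕ → Set (Set X), Fam 0 = 𝒮c ∧
      ∀ t, Fam (t + 1) = Fam t ∪ W (pick (Fam t)) :=
    ⟨fun t => Nat.rec 𝒮c (fun _ prev => prev ∪ W (pick prev)) t, rfl, fun _ => rfl⟩
  have hgood : ∀ t, Fam t ⊆ ℱ ∧ #(Fam t) ≤ κ := by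
    intro t
    induction t with
    | zero => rw [hFam0]; exact ⟨h𝒮1, h𝒮2⟩
    | succ t ih =>
      rw [hFamS]
      refine ⟨Set.union_subset ih.1 (hW1 _), ?_⟩
      refine le_trans (Cardinal.mk_union_le _ _) ?_
      calc #(Fam t) + #(W (pick (Fam t))) ≤ κ + κ := add_le_add ih.2 (hW2 _)
        _ = κ := Cardinal.add_eq_self hκ
  have hmono : ∀ s t : ℕ, s ≤ t → Fam s ⊆ Fam t := by
    intro s t hst
    induction hst with
    | refl => exact subset_rfl
    | step _ ih =>
      rw [hFamS]
      exact ih.trans Set.subset_union_left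
  set xs : ℕ → X := fun t => pick (Fam t) with hxsdef
  have hxs : ∀ t, xs t ∈ G ∩ ⋂₀ (Fam t) := fun t => hpick' (Fam t) (hgood t).1 (hgood t).2
  have hkey : ∀ s t : ℕ, s < t → xs t ∈ ⋂₀ (W (xs s)) := by
    intro s t hst
    have h1 : W (xs s) ⊆ Fam t := by
      have h2 : W (xs s) ⊆ Fam (s + 1) := by
        rw [hFamS]
        exact Set.subset_union_right
      exact h2.trans (hmono (s + 1) t hst)
    exact fun C hC => (hxs t).2 C (h1 hC)
  have hbase : ∀ t, xs t ∈ ⋂₀ 𝒮c := by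
    intro t C hC
    exact (hxs t).2 C (hmono 0 t (Nat.zero_le t) (hFam0 ▸ hC))
  -- tails and a cluster point
  set Tt : ℕ → Set X := fun t => closure {y | ∃ s, t ≤ s ∧ xs s = y} with hTt
  have hTmem : ∀ s t : ℕ, t ≤ s → xs s ∈ Tt t := fun s t h => subset_closure ⟨s, h, rfl⟩
  have hTmono : ∀ s t : ℕ, s ≤ t → Tt t ⊆ Tt s := by
    intro s t h
    apply closure_mono
    rintro y ⟨r, hr, rfl⟩
    exact ⟨r, le_trans h hr, rfl⟩
  obtain ⟨z, hz⟩ : (⋂₀ (Set.range Tt)).Nonempty := by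
    refine sInter_nonempty_of_fip hX ?_ ?_ ?_
    · rintro C ⟨t, rfl⟩
      exact isClosed_closure
    · intro u hu hufin
      have haux : ∀ v : Set (Set X), v.Finite → v ⊆ Set.range Tt →
          ∃ t₀ : ℕ, ∀ C ∈ v, Tt t₀ ⊆ C := by
        intro v hvfin
        refine Set.Finite.induction_on
          (motive := fun v _ => v ⊆ Set.range Tt → ∃ t₀ : ℕ, ∀ C ∈ v, Tt t₀ ⊆ C) _ hvfin ?_ ?_
        · exact fun _ => ⟨0, fun C hC => absurd hC (Set.notMem_empty C)⟩
        · intro a s _ _ ih hsub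
          obtain ⟨t₁, ht₁⟩ := ih fun y hy => hsub (Set.mem_insert_of_mem _ hy)
          obtain ⟨t₂, rfl⟩ := hsub (Set.mem_insert _ _)
          refine ⟨max t₁ t₂, ?_⟩
          rintro C (rfl | hC)
          · exact hTmono _ _ (le_max_right _ _)
          · exact (hTmono _ _ (le_max_left t₁ t₂)).trans (ht₁ C hC)
      obtain ⟨t₀, ht₀⟩ := haux u hufin hu
      exact ⟨xs t₀, fun C hC => ht₀ C hC (hTmem t₀ t₀ le_rfl)⟩
    · refine le_trans ?_ hκ
      rw [Cardinal.mk_le_aleph0_iff, Set.countable_coe_iff]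
      exact Set.countable_range Tt
  have hzdom : z ∈ ⋃₀ 𝒪 c := by
    apply h𝒮3
    intro C hC
    have h1 : {y | ∃ s, 0 ≤ s ∧ xs s = y} ⊆ C := by
      rintro y ⟨s, -, rfl⟩
      exact hbase s C hC
    have h2 : Tt 0 ⊆ C := closure_minimal h1 (hcl C (h𝒮1 hC))
    exact h2 (hz _ ⟨0, rfl⟩)
  obtain ⟨O, hO𝒪, hzO⟩ := hzdom
  have hOopen : IsOpen O := h𝒪.1 c O hO𝒪
  have hmeet : ∀ t : ℕ, ∃ s, t ≤ s ∧ xs s ∈ O := by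
    intro t
    have hzT : z ∈ Tt t := hz _ ⟨t, rfl⟩
    obtain ⟨y, hyO, hy⟩ := mem_closure_iff.mp hzT O hOopen hzO
    obtain ⟨s, hs, rfl⟩ := hy
    exact ⟨s, hs, hyO⟩
  obtain ⟨s₁, -, hs₁⟩ := hmeet 0
  obtain ⟨s₂, hs₂ge, hs₂⟩ := hmeet (s₁ + 1)
  have hstmem : xs s₂ ∈ SetStar {xs s₁} (𝒪 c) :=
    Set.subset_sUnion_of_mem (⟨hO𝒪, ⟨xs s₁, hs₁, rfl⟩⟩ :
      O ∈ {O' | O' ∈ 𝒪 c ∧ (O' ∩ {xs s₁}).Nonempty}) hs₂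
  have hfinal : xs s₂ ∈ SetStar {xs s₁} (𝒪 c) ∩ ⋂₀ W (xs s₁) :=
    ⟨hstmem, hkey s₁ s₂ hs₂ge⟩
  rw [hW3 (xs s₁) ((hxs s₁).1)] at hfinal
  exact hfinal

/-- Every initially `κ`-compact space with a quasi-`G_κ`-diagonal sequence is compact. -/
theorem initiallyCompact_quasiGDiagonalSeq_compact {X : Type u} [TopologicalSpace X]
    (κ : Cardinal.{u}) (hκ : ℵ₀ ≤ κ) (hX : InitiallyCompact X κ)
    (𝒪 : κ.ord.ToType → Set (Set X)) (h𝒪 : IsQuasiGDiagonalSeq κ 𝒪) :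
    CompactSpace X := by
  classical
  constructor
  apply isCompact_of_finite_subfamily_closed
  intro ι Z hZc hZe
  by_contra hnofin
  push_neg at hnofin
  -- The starting family of closed sets with FIP and empty intersection
  set 𝒜₀ : Set (Set X) :=
    Set.range (fun t : Finset ι => (Set.univ : Set X) ∩ ⋂ i ∈ t, Z i) with h𝒜₀
  have h𝒜₀cl : ∀ C ∈ 𝒜₀, IsClosed C := by
    rintro C ⟨t, rfl⟩
    exact isClosed_univ.inter (isClosed_biInter fun i _ => hZc i)
  have h𝒜₀fip : ∀ u ⊆ 𝒜₀, u.Finite → (⋂₀ u).Nonempty := by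
    intro u hu hufin
    have haux : ∀ v : Set (Set X), v.Finite → v ⊆ 𝒜₀ →
        ∃ t₀ : Finset ι, ∀ C ∈ v, ((Set.univ : Set X) ∩ ⋂ i ∈ t₀, Z i) ⊆ C := by
      intro v hvfin
      refine Set.Finite.induction_on
        (motive := fun v _ => v ⊆ 𝒜₀ →
          ∃ t₀ : Finset ι, ∀ C ∈ v, ((Set.univ : Set X) ∩ ⋂ i ∈ t₀, Z i) ⊆ C) _ hvfin ?_ ?_
      · exact fun _ => ⟨∅, fun C hC => absurd hC (Set.notMem_empty C)⟩
      · intro a s _ _ ih hsub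
        obtain ⟨t₁, ht₁⟩ := ih fun y hy => hsub (Set.mem_insert_of_mem _ hy)
        obtain ⟨t₂, rfl⟩ := hsub (Set.mem_insert _ _)
        refine ⟨t₁ ∪ t₂, ?_⟩
        rintro C (rfl | hC)
        · rintro y ⟨hy1, hy2⟩
          refine ⟨hy1, ?_⟩
          simp only [Set.mem_iInter] at hy2 ⊢
          exact fun i hi => hy2 i (Finset.mem_union_right _ hi)
        · refine Set.Subset.trans ?_ (ht₁ C hC)
          rintro y ⟨hy1, hy2⟩
          refine ⟨hy1, ?_⟩
          simp only [Set.mem_iInter] at hy2 ⊢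
          exact fun i hi => hy2 i (Finset.mem_union_left _ hi)
    obtain ⟨t₀, ht₀⟩ := haux u hufin hu
    obtain ⟨y, hy⟩ := hnofin t₀
    exact ⟨y, fun C hC => ht₀ C hC hy⟩
  -- Maximal closed FIP family
  obtain ⟨ℱ, h𝒜ℱ, hcl, hfip, hmaxmax⟩ := exists_maximal_closed_fip h𝒜₀cl h𝒜₀fip
  have hempty : ⋂₀ ℱ = ∅ := by
    rw [Set.eq_empty_iff_forall_notMem]
    intro x hx
    have hxZ : ∀ i : ι, x ∈ Z i := by
      intro i
      have hmem : ((Set.univ : Set X) ∩ ⋂ j ∈ ({i} : Finset ι), Z j) ∈ 𝒜₀ := ⟨{i}, rfl⟩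
      have h1 := hx _ (h𝒜ℱ hmem)
      have h2 := h1.2
      simp only [Set.mem_iInter] at h2
      exact h2 i (Finset.mem_singleton_self i)
    have hfinal : x ∈ (Set.univ : Set X) ∩ ⋂ i, Z i := ⟨trivial, Set.mem_iInter.mpr hxZ⟩
    rw [hZe] at hfinal
    exact hfinal
  have hmax : ∀ C : Set X, IsClosed C →
      (∀ u ⊆ ℱ, u.Finite → (C ∩ ⋂₀ u).Nonempty) → C ∈ ℱ := by
    intro C hCcl hC
    have h1 : (∀ D ∈ insert C ℱ, IsClosed D) ∧
        ∀ u ⊆ insert C ℱ, u.Finite → (⋂₀ u).Nonempty := by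
      constructor
      · rintro D (rfl | hD)
        · exact hCcl
        · exact hcl D hD
      · intro u hu hufin
        by_cases hCu : C ∈ u
        · have hu' : u \ {C} ⊆ ℱ := by
            rintro D ⟨hD, hDC⟩
            rcases hu hD with rfl | h
            · exact absurd rfl hDC
            · exact h
          obtain ⟨y, hy⟩ := hC (u \ {C}) hu' (hufin.diff (t := _))
          refine ⟨y, ?_⟩
          intro D hD
          by_cases hDC : D = C
          · exact hDC ▸ hy.1
          · exact hy.2 D ⟨hD, hDC⟩
        · have hu' : u ⊆ ℱ := by
            intro D hD
            rcases hu hD with rfl | h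
            · exact absurd hD hCu
            · exact h
          exact hfip u hu' hufin
    exact hmaxmax _ h1 (Set.subset_insert _ _) (Set.mem_insert _ _)
  have hdich : ∀ C : Set X, IsClosed C → C ∉ ℱ →
      ∃ u, u ⊆ ℱ ∧ #u ≤ κ ∧ C ∩ ⋂₀ u = ∅ := by
    intro C hCcl hCF
    by_contra h
    push_neg at h
    exact hCF (hmax C hCcl fun u hu hufin =>
      h u hu (le_trans hufin.lt_aleph0.le hκ))
  -- the A/D-split witnesses
  have hAD : ∀ γ : κ.ord.ToType, ∃ 𝒮, 𝒮 ⊆ ℱ ∧ #𝒮 ≤ κ ∧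
      ((⋃₀ 𝒪 γ)ᶜ ∉ ℱ → ⋂₀ 𝒮 ⊆ ⋃₀ 𝒪 γ) := by
    intro γ
    by_cases hA : (⋃₀ 𝒪 γ)ᶜ ∈ ℱ
    · exact ⟨∅, Set.empty_subset _, by simp, fun h => absurd hA h⟩
    · have hclosed : IsClosed (⋃₀ 𝒪 γ)ᶜ :=
        (isOpen_sUnion fun O hO => h𝒪.1 γ O hO).isClosed_compl
      obtain ⟨u, h1, h2, h3⟩ := hdich _ hclosed hA
      refine ⟨u, h1, h2, fun _ => ?_⟩
      intro y hy
      by_contra hyn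
      have : y ∈ (⋃₀ 𝒪 γ)ᶜ ∩ ⋂₀ u := ⟨hyn, hy⟩
      rw [h3] at this
      exact this
  choose 𝒮f h𝒮f1 h𝒮f2 h𝒮f3 using hAD
  -- the claim-C witnesses
  have hCC : ∀ γ : κ.ord.ToType, ∃ 𝒯, 𝒯 ⊆ ℱ ∧ #𝒯 ≤ κ ∧
      ((⋃₀ 𝒪 γ)ᶜ ∉ ℱ →
        {x : X | ∃ 𝒲, 𝒲 ⊆ ℱ ∧ #𝒲 ≤ κ ∧ SetStar {x} (𝒪 γ) ∩ ⋂₀ 𝒲 = ∅} ∩ ⋂₀ 𝒯 = ∅) := by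
    intro γ
    by_cases hA : (⋃₀ 𝒪 γ)ᶜ ∈ ℱ
    · exact ⟨∅, Set.empty_subset _, by simp, fun h => absurd hA h⟩
    · obtain ⟨𝒯, h1, h2, h3⟩ := claimC hκ hX h𝒪 hcl hfip γ (𝒮f γ) (h𝒮f1 γ) (h𝒮f2 γ)
        (h𝒮f3 γ hA)
      exact ⟨𝒯, h1, h2, fun _ => h3⟩
  choose 𝒯f h𝒯f1 h𝒯f2 h𝒯f3 using hCC
  -- the A-side witnesses
  have hAF : ∀ γ : κ.ord.ToType, ∃ 𝒰, 𝒰 ⊆ ℱ ∧ #𝒰 ≤ κ ∧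
      ((⋃₀ 𝒪 γ)ᶜ ∈ ℱ → (⋃₀ 𝒪 γ)ᶜ ∈ 𝒰) := by
    intro γ
    by_cases hA : (⋃₀ 𝒪 γ)ᶜ ∈ ℱ
    · refine ⟨{(⋃₀ 𝒪 γ)ᶜ}, by simpa using hA, ?_, fun _ => rfl⟩
      rw [Cardinal.mk_singleton]
      exact le_trans Cardinal.one_le_aleph0 hκ
    · exact ⟨∅, Set.empty_subset _, by simp, fun h => absurd h hA⟩
  choose 𝒰f h𝒰f1 h𝒰f2 h𝒰f3 using hAF
  -- the mega family and its intersection point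
  set MEGA : Set (Set X) := ⋃ γ : κ.ord.ToType, (𝒮f γ ∪ 𝒯f γ ∪ 𝒰f γ) with hMEGA
  have hMsub : MEGA ⊆ ℱ := by
    rintro C hC
    obtain ⟨s, ⟨γ, rfl⟩, hC⟩ := hC
    rcases hC with (hC | hC) | hC
    · exact h𝒮f1 γ hC
    · exact h𝒯f1 γ hC
    · exact h𝒰f1 γ hC
  have hMcard : #MEGA ≤ κ := by
    rw [hMEGA]
    refine mk_iUnion_le_kappa hκ _ ?_
    intro γ
    refine le_trans (Cardinal.mk_union_le _ _) ?_
    have h1 : #((𝒮f γ ∪ 𝒯f γ : Set (Set X))) ≤ κ := by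
      refine le_trans (Cardinal.mk_union_le _ _) ?_
      calc #(𝒮f γ) + #(𝒯f γ) ≤ κ + κ := add_le_add (h𝒮f2 γ) (h𝒯f2 γ)
        _ = κ := Cardinal.add_eq_self hκ
    calc #((𝒮f γ ∪ 𝒯f γ : Set (Set X))) + #(𝒰f γ) ≤ κ + κ := add_le_add h1 (h𝒰f2 γ)
      _ = κ := Cardinal.add_eq_self hκ
  obtain ⟨x₀, hx₀⟩ : (⋂₀ MEGA).Nonempty :=
    sInter_nonempty_of_fip hX (fun C hC => hcl C (hMsub hC))
      (fun u hu hufin => hfip u (hu.trans hMsub) hufin) hMcard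
  -- apply the φ-fact to x₀
  obtain ⟨γstar, hdom, 𝒲, h𝒲1, h𝒲2, h𝒲3⟩ :=
    phi_fact hκ hX h𝒪 hcl hfip hempty hdich x₀
  have hAno : (⋃₀ 𝒪 γstar)ᶜ ∉ ℱ := by
    intro hA
    have h1 : (⋃₀ 𝒪 γstar)ᶜ ∈ MEGA :=
      Set.mem_iUnion.mpr ⟨γstar, Or.inr (h𝒰f3 γstar hA)⟩
    exact (hx₀ _ h1) hdom
  have hxG : x₀ ∈ {x : X | ∃ 𝒲, 𝒲 ⊆ ℱ ∧ #𝒲 ≤ κ ∧ SetStar {x} (𝒪 γstar) ∩ ⋂₀ 𝒲 = ∅} :=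
    ⟨𝒲, h𝒲1, h𝒲2, h𝒲3⟩
  have hxT : x₀ ∈ ⋂₀ 𝒯f γstar := by
    intro C hC
    exact hx₀ C (Set.mem_iUnion.mpr ⟨γstar, Or.inl (Or.inr hC)⟩)
  have hcontra := h𝒯f3 γstar hAno
  rw [Set.eq_empty_iff_forall_notMem] at hcontra
  exact hcontra x₀ ⟨hxG, hxT⟩
end

section
/- Let κ be an infinite cardinal. If X is a Hausdorff initially κ-compact topological space with a G_κ-diagonal, then the weight of X is at most κ. -/
open Set Cardinal

universe u

/-- The weight of `X`: the smallest cardinality of a base for the topology. -/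
noncomputable def weight (X : Type u) [TopologicalSpace X] : Cardinal.{u} :=
  sInf {c | ∃ B : Set (Set X), TopologicalSpace.IsTopologicalBasis B ∧ #B = c}


lemma mem_setStar_singleton {X : Type u} {x y : X} {𝒪 : Set (Set X)} :
    y ∈ SetStar {x} 𝒪 ↔ ∃ O ∈ 𝒪, x ∈ O ∧ y ∈ O := by
  constructor
  · rintro ⟨O, ⟨hO, z, hzO, hz⟩, hyO⟩
    rw [mem_singleton_iff] at hz
    exact ⟨O, hO, hz ▸ hzO, hyO⟩
  · rintro ⟨O, hO, hxO, hyO⟩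
    exact ⟨O, ⟨hO, x, hxO, rfl⟩, hyO⟩

lemma isOpen_setStar {X : Type u} [TopologicalSpace X] {A : Set X} {𝒪 : Set (Set X)}
    (h : ∀ O ∈ 𝒪, IsOpen O) : IsOpen (SetStar A 𝒪) :=
  isOpen_sUnion fun O hO => h O hO.1

/-- FIP version of initial κ-compactness. -/
lemma sInter_nonempty_of_initiallyCompact {X : Type u} [TopologicalSpace X]
    {κ : Cardinal.{u}} (hX : InitiallyCompact X κ) (𝒞 : Set (Set X))
    (hcl : ∀ C ∈ 𝒞, IsClosed C) (hcard : #𝒞 ≤ κ)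
    (hfip : ∀ F ⊆ 𝒞, F.Finite → (⋂₀ F).Nonempty) :
    (⋂₀ 𝒞).Nonempty := by
  by_contra h
  rw [Set.not_nonempty_iff_eq_empty] at h
  have hcov : ⋃₀ (compl '' 𝒞) = Set.univ := by
    rw [Set.sUnion_image, eq_univ_iff_forall]
    intro x
    have hx : x ∉ ⋂₀ 𝒞 := by rw [h]; exact notMem_empty x
    rw [Set.mem_sInter] at hx; push_neg at hx
    obtain ⟨C, hC, hxC⟩ := hx
    exact Set.mem_biUnion hC hxC
  obtain ⟨F, hF𝒞, hFfin, hFcov⟩ := hX (compl '' 𝒞)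
    (by rintro U ⟨C, hC, rfl⟩; exact (hcl C hC).isOpen_compl) hcov
    (le_trans mk_image_le hcard)
  have hsub : compl '' F ⊆ 𝒞 := by
    rintro c ⟨U, hUF, rfl⟩
    obtain ⟨C, hC, rfl⟩ := hF𝒞 hUF
    rw [compl_compl]; exact hC
  obtain ⟨x, hx⟩ := hfip (compl '' F) hsub (hFfin.image _)
  rw [Set.mem_sInter] at hx
  have hxU : x ∈ ⋃₀ F := by rw [hFcov]; exact Set.mem_univ x
  obtain ⟨U, hUF, hxU⟩ := hxU
  exact hx Uᶜ (Set.mem_image_of_mem _ hUF) hxU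

/-- A finite subset of the union of a nonempty chain is inside one member. -/
lemma finite_subset_chain_mem {α : Type*} {c : Set (Set α)}
    (hc : IsChain (· ⊆ ·) c) (hne : c.Nonempty) {F : Set α} (hF : F.Finite) :
    F ⊆ ⋃₀ c → ∃ A ∈ c, F ⊆ A := by
  refine Set.Finite.induction_on (motive := fun F _ => F ⊆ ⋃₀ c → ∃ A ∈ c, F ⊆ A) F hF
    (fun _ => ⟨hne.choose, hne.choose_spec, empty_subset _⟩) ?_
  intro a s _ _ ih hsub
  obtain ⟨A, hAc, hsA⟩ := ih fun y hy => hsub (Set.mem_insert_of_mem _ hy)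
  obtain ⟨B, hBc, haB⟩ := hsub (Set.mem_insert a s)
  rcases eq_or_ne A B with rfl | hAB
  · exact ⟨A, hAc, Set.insert_subset haB hsA⟩
  rcases hc hAc hBc hAB with hab | hba
  · exact ⟨B, hBc, Set.insert_subset haB (hsA.trans hab)⟩
  · exact ⟨A, hAc, Set.insert_subset (hba haB) hsA⟩

lemma compactSpace_of_covers {X : Type u} [TopologicalSpace X] [T1Space X]
    {κ : Cardinal.{u}} (hκ : ℵ₀ ≤ κ) (hX : InitiallyCompact X κ)
    {ι : Type u} (hι : #ι ≤ κ) (𝒪 : ι → Set (Set X))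
    (hop : ∀ i, ∀ O ∈ 𝒪 i, IsOpen O)
    (hcov : ∀ (i : ι) (x : X), ∃ O ∈ 𝒪 i, x ∈ O)
    (hsep : ∀ x y : X, (∀ i, y ∈ SetStar {x} (𝒪 i)) → y = x) :
    CompactSpace X := by
  classical
  constructor
  apply isCompact_of_finite_subfamily_closed
  intro ι₀ Z hZc hZe
  by_contra hno
  push_neg at hno
  have hfin : ∀ t : Finset ι₀, (⋂ i ∈ t, Z i).Nonempty := by
    intro t
    obtain ⟨x, -, hx⟩ := hno t
    exact ⟨x, hx⟩
  set Cst : X × ι → Set X := fun p => (SetStar {p.1} (𝒪 p.2))ᶜ with hCstdef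
  have hCstcl : ∀ p, IsClosed (Cst p) := fun p => (isOpen_setStar (hop p.2)).isClosed_compl
  set 𝒵 : Set (Set X) := Set.range Z with h𝒵def
  have h𝒵cl : ∀ C ∈ 𝒵, IsClosed C := by rintro C ⟨j, rfl⟩; exact hZc j
  have hFIPZ : ∀ F ⊆ 𝒵, F.Finite → (⋂₀ F).Nonempty := by
    intro F hF hFfin
    have hch : ∀ s : F, ∃ j, Z j = (s : Set X) := fun s => hF s.2
    choose g hg using hch
    have hfs : Finite ↥F := hFfin.to_subtype
    have hrg : (Set.range g).Finite := Set.finite_range g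
    obtain ⟨x, hx⟩ := hfin hrg.toFinset
    refine ⟨x, ?_⟩
    rintro s hs
    have hmem : g ⟨s, hs⟩ ∈ hrg.toFinset := by
      rw [Set.Finite.mem_toFinset]; exact ⟨⟨s, hs⟩, rfl⟩
    have hx' := (Set.mem_iInter₂.1 hx) _ hmem
    rw [hg ⟨s, hs⟩] at hx'
    exact hx'
  set P : Set (Set (X × ι)) := {A | (∀ p ∈ A, ∀ q ∈ A, p ≠ q →
      p.1 ∉ SetStar {q.1} (𝒪 q.2) ∨ q.1 ∉ SetStar {p.1} (𝒪 p.2)) ∧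
      ∀ F ⊆ 𝒵 ∪ Cst '' A, F.Finite → (⋂₀ F).Nonempty} with hPdef
  have hchain : ∀ c ⊆ P, IsChain (· ⊆ ·) c → ∃ ub ∈ P, ∀ s ∈ c, s ⊆ ub := by
    intro c hcP hc
    rcases c.eq_empty_or_nonempty with rfl | hcne
    · refine ⟨∅, ⟨fun p hp => absurd hp (notMem_empty p), fun F hF hFfin => ?_⟩,
        fun s hs => absurd hs (notMem_empty s)⟩
      apply hFIPZ F ?_ hFfin
      simpa using hF
    · refine ⟨⋃₀ c, ⟨?_, ?_⟩, fun s hs => subset_sUnion_of_mem hs⟩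
      · rintro p ⟨A, hAc, hpA⟩ q ⟨B, hBc, hqB⟩ hpq
        rcases eq_or_ne A B with rfl | hAB
        · exact (hcP hAc).1 p hpA q hqB hpq
        rcases hc hAc hBc hAB with hab | hba
        · exact (hcP hBc).1 p (hab hpA) q hqB hpq
        · exact (hcP hAc).1 p hpA q (hba hqB) hpq
      · intro F hF hFfin
        have hch2 : IsChain (· ⊆ ·) ((fun A => 𝒵 ∪ Cst '' A) '' c) := by
          rintro _ ⟨A, hAc, rfl⟩ _ ⟨B, hBc, rfl⟩ hne'
          rcases eq_or_ne A B with rfl | hAB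
          · exact absurd rfl hne'
          rcases hc hAc hBc hAB with h | h
          · exact Or.inl (Set.union_subset_union_right _ (Set.image_mono h))
          · exact Or.inr (Set.union_subset_union_right _ (Set.image_mono h))
        have hsub2 : F ⊆ ⋃₀ ((fun A => 𝒵 ∪ Cst '' A) '' c) := by
          intro s hsF
          rcases hF hsF with hs | ⟨p, hpU, rfl⟩
          · exact ⟨𝒵 ∪ Cst '' hcne.choose, ⟨hcne.choose, hcne.choose_spec, rfl⟩, Or.inl hs⟩
          · obtain ⟨A, hAc, hpA⟩ := hpU
            exact ⟨𝒵 ∪ Cst '' A, ⟨A, hAc, rfl⟩, Or.inr ⟨p, hpA, rfl⟩⟩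
        obtain ⟨D, hD, hFD⟩ := finite_subset_chain_mem hch2 (hcne.image _) hFfin hsub2
        obtain ⟨A, hAc, rfl⟩ := hD
        exact (hcP hAc).2 F hFD hFfin
  obtain ⟨M, hM⟩ := zorn_subset P hchain
  have hMpair := hM.prop.1
  have hMfip := hM.prop.2
  rcases le_or_gt (#↥M) κ with hMle | hMgt
  · have hHne : (⋂₀ (Cst '' M)).Nonempty := by
      apply sInter_nonempty_of_initiallyCompact hX
      · rintro C ⟨p, hpM, rfl⟩; exact hCstcl p
      · exact le_trans mk_image_le hMle
      · intro F hF hFfin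
        exact hMfip F (fun s hs => Or.inr (hF hs)) hFfin
    obtain ⟨x, hx⟩ := hHne
    by_cases hgood : ∀ i, ∃ F, F ⊆ 𝒵 ∪ Cst '' M ∧ F.Finite ∧ ⋂₀ F ⊆ SetStar {x} (𝒪 i)
    · choose Fi hFi1 hFi2 hFi3 using hgood
      have hxZ : ∀ j, x ∈ Z j := by
        intro j
        have h1 : (⋂₀ (insert (Z j) ((fun i => ⋂₀ Fi i) '' Set.univ))).Nonempty := by
          apply sInter_nonempty_of_initiallyCompact hX
          · rintro C hC
            rcases Set.mem_insert_iff.1 hC with rfl | ⟨i, -, rfl⟩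
            · exact hZc j
            · refine isClosed_sInter (fun s hs => ?_)
              rcases hFi1 i hs with h | ⟨p, -, rfl⟩
              · exact h𝒵cl s h
              · exact hCstcl p
          · calc #↥(insert (Z j) ((fun i => ⋂₀ Fi i) '' Set.univ))
                ≤ #↥((fun i => ⋂₀ Fi i) '' Set.univ) + 1 := mk_insert_le
              _ ≤ #ι + 1 := by gcongr; exact mk_image_le.trans (le_of_eq mk_univ)
              _ ≤ κ + κ := add_le_add hι (one_le_aleph0.trans hκ)
              _ = κ := add_eq_self hκ
          · intro G hG hGfin
            set G' := G \ {Z j} with hG'def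
            have hG'sub : G' ⊆ (fun i => ⋂₀ Fi i) '' Set.univ := by
              intro s hs
              rcases Set.mem_insert_iff.1 (hG hs.1) with h | h
              · exact absurd h (by simpa using hs.2)
              · exact h
            have hG'f : Finite ↥G' := (hGfin.subset diff_subset).to_subtype
            have hch2 : ∀ s : ↥G', ∃ i, ⋂₀ Fi i = (s : Set X) := by
              intro s; obtain ⟨i, -, hi⟩ := hG'sub s.2; exact ⟨i, hi⟩
            choose gi hgi using hch2
            have hFbigsub : insert (Z j) (⋃ s : ↥G', Fi (gi s)) ⊆ 𝒵 ∪ Cst '' M := by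
              intro s hs
              rcases Set.mem_insert_iff.1 hs with rfl | hs'
              · exact Or.inl ⟨j, rfl⟩
              · obtain ⟨t, ht⟩ := Set.mem_iUnion.1 hs'
                exact hFi1 (gi t) ht
            have hFbigfin : (insert (Z j) (⋃ s : ↥G', Fi (gi s))).Finite :=
              Set.Finite.insert _ (Set.finite_iUnion fun s => hFi2 (gi s))
            obtain ⟨w, hw⟩ := hMfip _ hFbigsub hFbigfin
            refine ⟨w, ?_⟩
            intro s hs
            by_cases hsj : s = Z j
            · subst hsj; exact hw _ (Set.mem_insert _ _)
            · have hs' : s ∈ G' := ⟨hs, by simpa using hsj⟩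
              have hws : w ∈ ⋂₀ Fi (gi ⟨s, hs'⟩) := fun u hu =>
                hw u (Set.mem_insert_of_mem _ (Set.mem_iUnion.2 ⟨⟨s, hs'⟩, hu⟩))
              rw [hgi ⟨s, hs'⟩] at hws
              exact hws
        obtain ⟨y, hy⟩ := h1
        have hyx : y = x := by
          apply hsep
          intro i
          exact hFi3 i (hy _ (Set.mem_insert_of_mem _ ⟨i, trivial, rfl⟩))
        have := hy (Z j) (Set.mem_insert _ _)
        rwa [hyx] at this
      have hcontr : x ∈ (Set.univ : Set X) ∩ ⋂ i, Z i := ⟨trivial, Set.mem_iInter.2 hxZ⟩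
      rw [hZe] at hcontr
      exact hcontr
    · push_neg at hgood
      obtain ⟨i, hi⟩ := hgood
      have hxst : x ∈ SetStar {x} (𝒪 i) := by
        obtain ⟨O, hO, hxO⟩ := hcov i x
        exact mem_setStar_singleton.2 ⟨O, hO, hxO, hxO⟩
      have hxM : ∀ p ∈ M, x ∈ Cst p := fun p hp => hx _ ⟨p, hp, rfl⟩
      have hpnotM : (x, i) ∉ M := fun hmem => (hxM _ hmem) hxst
      have hnewP : insert (x, i) M ∈ P := by
        constructor
        · intro p hp q hq hpq
          rcases Set.mem_insert_iff.1 hp with rfl | hpM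
          · rcases Set.mem_insert_iff.1 hq with rfl | hqM
            · exact absurd rfl hpq
            · exact Or.inl (hxM q hqM)
          · rcases Set.mem_insert_iff.1 hq with rfl | hqM
            · exact Or.inr (hxM p hpM)
            · exact hMpair p hpM q hqM hpq
        · intro F hF hFfin
          rw [Set.image_insert_eq] at hF
          by_cases hmem : Cst (x, i) ∈ 𝒵 ∪ Cst '' M
          · apply hMfip F ?_ hFfin
            intro s hs
            rcases hF hs with h | h
            · exact Or.inl h
            · rcases Set.mem_insert_iff.1 h with rfl | h'
              · exact hmem
              · exact Or.inr h'
          · have hF'sub : F \ {Cst (x, i)} ⊆ 𝒵 ∪ Cst '' M := by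
              intro s hs
              rcases hF hs.1 with h | h
              · exact Or.inl h
              · rcases Set.mem_insert_iff.1 h with h'' | h'
                · exact absurd h'' (by simpa using hs.2)
                · exact Or.inr h'
            have hnsub := hi _ hF'sub (hFfin.subset diff_subset)
            rw [Set.not_subset] at hnsub
            obtain ⟨w, hw1, hw2⟩ := hnsub
            refine ⟨w, ?_⟩
            intro s hs
            by_cases hsx : s = Cst (x, i)
            · subst hsx; exact hw2
            · exact Set.mem_sInter.1 hw1 s ((Set.mem_diff _).2 ⟨hs, by simpa using hsx⟩)
      have hsub := hM.2 hnewP (Set.subset_insert _ _)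
      exact hpnotM (hsub (Set.mem_insert _ _))
  · exfalso
    rcases isEmpty_or_nonempty ι with hι0 | hι0
    · haveI : IsEmpty (X × ι) := by infer_instance
      have h0 : #↥M = 0 := mk_eq_zero _
      rw [h0] at hMgt
      exact (Cardinal.zero_le κ).not_gt hMgt
    have hfib : ∃ i, {p ∈ M | p.2 = i}.Infinite := by
      by_contra hf
      push_neg at hf
      replace hf : ∀ i, {p ∈ M | p.2 = i}.Finite := by simpa using hf
      have hsub : M ⊆ ⋃ i, {p ∈ M | p.2 = i} := fun p hp => Set.mem_iUnion.2 ⟨p.2, hp, rfl⟩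
      have hcard : #↥M ≤ #ι * ℵ₀ := by
        calc #↥M ≤ #↥(⋃ i, {p ∈ M | p.2 = i}) := mk_le_mk_of_subset hsub
          _ ≤ #ι * ⨆ i, #↥{p ∈ M | p.2 = i} := mk_iUnion_le _
          _ ≤ #ι * ℵ₀ := by
              gcongr
              exact ciSup_le fun i => (hf i).lt_aleph0.le
      have hle : #↥M ≤ κ := by
        refine hcard.trans ?_
        calc #ι * ℵ₀ ≤ κ * κ := mul_le_mul' hι hκ
          _ = κ := mul_eq_self hκ
      exact hMgt.not_ge hle
    obtain ⟨i0, hinf⟩ := hfib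
    set e := hinf.natEmbedding with he
    set d : ℕ → X := fun n => ((e n : X × ι)).1 with hd
    have hmem : ∀ n, ((e n : X × ι)) ∈ M := fun n => (e n).2.1
    have hsnd : ∀ n, ((e n : X × ι)).2 = i0 := fun n => (e n).2.2
    have hkey : ∀ O ∈ 𝒪 i0, ∀ n m, d n ∈ O → d m ∈ O → n = m := by
      intro O hO n m hn hm
      by_contra hnm
      have hne : (e n : X × ι) ≠ (e m : X × ι) := fun h => hnm (e.injective (Subtype.ext h))
      rcases hMpair _ (hmem n) _ (hmem m) hne with h | h
      · apply h
        rw [hsnd m]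
        exact mem_setStar_singleton.2 ⟨O, hO, hm, hn⟩
      · apply h
        rw [hsnd n]
        exact mem_setStar_singleton.2 ⟨O, hO, hn, hm⟩
    have hdinj : Function.Injective d := by
      intro n m hnm
      obtain ⟨O, hO, hdn⟩ := hcov i0 (d n)
      exact hkey O hO n m hdn (hnm ▸ hdn)
    set Dset := Set.range d with hDsetdef
    have hDco : IsOpen Dsetᶜ := by
      rw [isOpen_iff_forall_mem_open]
      intro y hy
      obtain ⟨O, hO, hyO⟩ := hcov i0 y
      by_cases hex : ∃ n, d n ∈ O
      · obtain ⟨n, hn⟩ := hex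
        refine ⟨O \ {d n}, ?_, (hop i0 O hO).sdiff isClosed_singleton, ?_⟩
        · rintro z ⟨hzO, hzn⟩ ⟨m, rfl⟩
          have hmn : m = n := hkey O hO m n hzO hn
          exact hzn (Set.mem_singleton_iff.2 (by rw [hmn]))
        · rw [Set.mem_diff, Set.mem_singleton_iff]
          refine ⟨hyO, fun h => hy ⟨n, h.symm⟩⟩
      · refine ⟨O, ?_, hop i0 O hO, hyO⟩
        rintro z hz ⟨m, hm⟩
        exact hex ⟨m, by rw [hm]; exact hz⟩
    choose On hOn1 hOn2 using fun n => hcov i0 (d n)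
    have hopen𝒞 : ∀ U ∈ insert Dsetᶜ (Set.range On), IsOpen U := by
      rintro U hU
      rcases Set.mem_insert_iff.1 hU with rfl | ⟨n, rfl⟩
      · exact hDco
      · exact hop i0 _ (hOn1 n)
    have hcov𝒞 : ⋃₀ insert Dsetᶜ (Set.range On) = Set.univ := by
      rw [Set.eq_univ_iff_forall]
      intro y
      by_cases hyD : y ∈ Dset
      · obtain ⟨n, rfl⟩ := hyD
        exact ⟨On n, Set.mem_insert_of_mem _ ⟨n, rfl⟩, hOn2 n⟩
      · exact ⟨Dsetᶜ, Set.mem_insert _ _, hyD⟩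
    have hcard𝒞 : #↥(insert Dsetᶜ (Set.range On)) ≤ κ := by
      calc #↥(insert Dsetᶜ (Set.range On)) ≤ #↥(Set.range On) + 1 := mk_insert_le
        _ ≤ ℵ₀ + ℵ₀ := add_le_add (by have := (Set.countable_range On).to_subtype; exact Cardinal.mk_le_aleph0) one_le_aleph0
        _ = ℵ₀ := add_eq_self le_rfl
        _ ≤ κ := hκ
    obtain ⟨F, hF𝒞, hFfin, hFcov⟩ := hX (insert Dsetᶜ (Set.range On)) hopen𝒞 hcov𝒞 hcard𝒞
    have hOnF : ∀ n, On n ∈ F := by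
        intro n
        have hdn : d n ∈ ⋃₀ F := by rw [hFcov]; trivial
        obtain ⟨V, hVF, hdV⟩ := hdn
        rcases Set.mem_insert_iff.1 (hF𝒞 hVF) with rfl | ⟨m, rfl⟩
        · exact absurd (Set.mem_range_self n) hdV
        · rw [hkey (On m) (hOn1 m) n m hdV (hOn2 m)]
          exact hVF
    have hOninj : Function.Injective On := by
      intro n m h
      exact hkey (On m) (hOn1 m) n m (h ▸ hOn2 n) (hOn2 m)
    exact (Set.infinite_of_injective_forall_mem hOninj hOnF) hFfin

lemma weight_le_of_compact {X : Type u} [TopologicalSpace X] [T2Space X] [CompactSpace X]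
    {κ : Cardinal.{u}} (hκ : ℵ₀ ≤ κ) {𝒰 : Set (Set (X × X))}
    (hUo : ∀ U ∈ 𝒰, IsOpen U) (hUc : #𝒰 ≤ κ) (hUd : ⋂₀ 𝒰 = Set.diagonal X) :
    weight X ≤ κ := by
  classical
  -- Step 1: for each U in 𝒰 a finite family of open sets separating pairs outside U
  have hstep : ∀ U : ↥𝒰, ∃ B : Set (Set X), B.Finite ∧ (∀ b ∈ B, IsOpen b) ∧
      ∀ x y : X, (x, y) ∉ (U : Set (X × X)) →
        ∃ V ∈ B, ∃ W ∈ B, x ∈ V ∧ y ∈ W ∧ V ∩ W = ∅ := by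
    rintro ⟨U, hU⟩
    have hKc : IsCompact Uᶜ := (hUo U hU).isClosed_compl.isCompact
    have hsep : ∀ z : ↥(Uᶜ), ∃ VW : Set X × Set X, IsOpen VW.1 ∧ IsOpen VW.2 ∧
        (z : X × X).1 ∈ VW.1 ∧ (z : X × X).2 ∈ VW.2 ∧ VW.1 ∩ VW.2 = ∅ := by
      rintro ⟨z, hz⟩
      have hne : z.1 ≠ z.2 := by
        intro h
        apply hz
        have hzd : z ∈ Set.diagonal X := h
        rw [← hUd] at hzd
        exact hzd U hU
      obtain ⟨V, W, hVo, hWo, hxV, hyW, hd⟩ := t2_separation hne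
      exact ⟨(V, W), hVo, hWo, hxV, hyW, hd.inter_eq⟩
    choose f hf1 hf2 hf3 hf4 hf5 using hsep
    have hcover : Uᶜ ⊆ ⋃ z : ↥(Uᶜ), (f z).1 ×ˢ (f z).2 := by
      intro z hz
      exact Set.mem_iUnion.2 ⟨⟨z, hz⟩, Set.mk_mem_prod (hf3 ⟨z, hz⟩) (hf4 ⟨z, hz⟩)⟩
    obtain ⟨t, ht⟩ := hKc.elim_finite_subcover (fun z : ↥(Uᶜ) => (f z).1 ×ˢ (f z).2)
      (fun z => (hf1 z).prod (hf2 z)) hcover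
    refine ⟨⋃ z ∈ t, {(f z).1, (f z).2}, ?_, ?_, ?_⟩
    · exact t.finite_toSet.biUnion (fun z _ => (Set.finite_singleton _).insert _)
    · intro b hb
      obtain ⟨z, -, hz⟩ := Set.mem_iUnion₂.1 hb
      rcases Set.mem_insert_iff.1 hz with rfl | hz'
      · exact hf1 z
      · rw [Set.mem_singleton_iff.1 hz']
        exact hf2 z
    · intro x y hxy
      have : (x, y) ∈ ⋃ z ∈ t, (f z).1 ×ˢ (f z).2 := ht hxy
      obtain ⟨z, hzt, hzmem⟩ := Set.mem_iUnion₂.1 this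
      refine ⟨(f z).1, Set.mem_biUnion hzt (Set.mem_insert _ _),
        (f z).2, Set.mem_biUnion hzt (Set.mem_insert_of_mem _ rfl), hzmem.1, hzmem.2, hf5 z⟩
  choose B hB1 hB2 hB3 using hstep
  set ℬ : Set (Set X) := ⋃ U : ↥𝒰, B U with hℬdef
  have hℬcard : #↥ℬ ≤ κ := by
    rcases isEmpty_or_nonempty ↥𝒰 with h0 | h0
    · rw [Set.iUnion_of_empty] at hℬdef
      rw [hℬdef]
      simp
    calc #↥ℬ ≤ #↥𝒰 * ⨆ U : ↥𝒰, #↥(B U) := mk_iUnion_le _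
      _ ≤ κ * ℵ₀ := mul_le_mul' hUc (ciSup_le fun U => (hB1 U).lt_aleph0.le)
      _ ≤ κ * κ := mul_le_mul' le_rfl hκ
      _ = κ := mul_eq_self hκ
  have hℬopen : ∀ b ∈ ℬ, IsOpen b := by
    intro b hb
    obtain ⟨U, hU⟩ := Set.mem_iUnion.1 hb
    exact hB2 U b hU
  have hℬsep : ∀ x y : X, x ≠ y → ∃ V ∈ ℬ, ∃ W ∈ ℬ, x ∈ V ∧ y ∈ W ∧ V ∩ W = ∅ := by
    intro x y hxy
    have : (x, y) ∉ Set.diagonal X := by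
      intro h
      exact hxy h
    rw [← hUd, Set.mem_sInter] at this
    push_neg at this
    obtain ⟨U, hU, hnot⟩ := this
    obtain ⟨V, hV, W, hW, h1, h2, h3⟩ := hB3 ⟨U, hU⟩ x y hnot
    exact ⟨V, Set.mem_iUnion.2 ⟨⟨U, hU⟩, hV⟩, W, Set.mem_iUnion.2 ⟨⟨U, hU⟩, hW⟩, h1, h2, h3⟩
  -- the basis of finite intersections
  set 𝔅 : Set (Set X) := Set.sInter '' {f : Set (Set X) | f.Finite ∧ f ⊆ ℬ} with h𝔅def
  have hbasis : TopologicalSpace.IsTopologicalBasis 𝔅 := by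
    apply TopologicalSpace.isTopologicalBasis_of_isOpen_of_nhds
    · rintro u ⟨g, ⟨hgfin, hgsub⟩, rfl⟩
      exact hgfin.isOpen_sInter (fun s hs => hℬopen s (hgsub hs))
    · intro a u hau hu
      have hKc : IsCompact uᶜ := hu.isClosed_compl.isCompact
      have hsep2 : ∀ y : ↥(uᶜ), ∃ VW : Set X × Set X, VW.1 ∈ ℬ ∧ VW.2 ∈ ℬ ∧
          a ∈ VW.1 ∧ (y : X) ∈ VW.2 ∧ VW.1 ∩ VW.2 = ∅ := by
        rintro ⟨y, hy⟩
        have hay : a ≠ y := fun h => hy (h ▸ hau)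
        obtain ⟨V, hV, W, hW, h1, h2, h3⟩ := hℬsep a y hay
        exact ⟨(V, W), hV, hW, h1, h2, h3⟩
      choose g hg1 hg2 hg3 hg4 hg5 using hsep2
      have hcover : uᶜ ⊆ ⋃ y : ↥(uᶜ), (g y).2 := fun y hy =>
        Set.mem_iUnion.2 ⟨⟨y, hy⟩, hg4 ⟨y, hy⟩⟩
      obtain ⟨t, ht⟩ := hKc.elim_finite_subcover (fun y : ↥(uᶜ) => (g y).2)
        (fun y => hℬopen _ (hg2 y)) hcover
      refine ⟨⋂₀ ((fun y : ↥(uᶜ) => (g y).1) '' ↑t), ⟨_, ⟨t.finite_toSet.image _,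
        ?_⟩, rfl⟩, ?_, ?_⟩
      · rintro s ⟨y, -, rfl⟩
        exact hg1 y
      · intro s hs
        obtain ⟨y, -, rfl⟩ := hs
        exact hg3 y
      · intro z hz
        by_contra hzu
        have hzK : z ∈ uᶜ := hzu
        obtain ⟨y, hyt, hyz⟩ := Set.mem_iUnion₂.1 (ht hzK)
        have hz1 : z ∈ (g y).1 := Set.mem_sInter.1 hz _ ⟨y, hyt, rfl⟩
        have : z ∈ (g y).1 ∩ (g y).2 := ⟨hz1, hyz⟩
        rw [hg5 y] at this
        exact this
  -- cardinality of the basis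
  have h𝔅card : #↥𝔅 ≤ κ := by
    have h1 : #↥𝔅 ≤ #↥{f : Set (Set X) | f.Finite ∧ f ⊆ ℬ} := mk_image_le
    have hsurj : {f : Set (Set X) | f.Finite ∧ f ⊆ ℬ} ⊆
        Set.range (fun s : Finset ↥ℬ => (fun b : ↥ℬ => (b : Set X)) '' ↑s) := by
      rintro f ⟨hffin, hfsub⟩
      have hpre : ((fun b : ↥ℬ => (b : Set X)) ⁻¹' f).Finite :=
        hffin.preimage (Set.injOn_of_injective Subtype.coe_injective)
      refine ⟨hpre.toFinset, ?_⟩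
      ext s
      simp only [Set.Finite.coe_toFinset, Set.mem_image, Set.mem_preimage]
      constructor
      · rintro ⟨b, hb, rfl⟩
        exact hb
      · intro hs
        exact ⟨⟨s, hfsub hs⟩, hs, rfl⟩
    have h2 : #↥{f : Set (Set X) | f.Finite ∧ f ⊆ ℬ} ≤ #(Finset ↥ℬ) :=
      (mk_le_mk_of_subset hsurj).trans mk_range_le
    have h3 : #(Finset ↥ℬ) ≤ #(List ↥ℬ) := by
      refine mk_le_of_surjective (f := fun l : List ↥ℬ => l.toFinset) ?_
      intro s
      exact ⟨s.toList, by simp⟩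
    have h4 : #(List ↥ℬ) ≤ max ℵ₀ #↥ℬ := mk_list_le_max _
    refine h1.trans (h2.trans (h3.trans (h4.trans ?_)))
    exact max_le hκ hℬcard
  have : weight X ≤ #↥𝔅 := csInf_le' ⟨𝔅, hbasis, rfl⟩
  exact this.trans h𝔅card

/-- A Hausdorff initially `κ`-compact space with a `G_κ`-diagonal has weight at most `κ`. -/
theorem weight_le_of_initiallyCompact_GDiagonal {X : Type u} [TopologicalSpace X] [T2Space X]
    (κ : Cardinal.{u}) (hκ : ℵ₀ ≤ κ) (hX : InitiallyCompact X κ)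
    (hdiag : ∃ 𝒰 : Set (Set (X × X)), (∀ U ∈ 𝒰, IsOpen U) ∧ #𝒰 ≤ κ ∧
      ⋂₀ 𝒰 = Set.diagonal X) :
    weight X ≤ κ := by
  obtain ⟨𝒰, hUo, hUc, hUd⟩ := hdiag
  let 𝒪 : ↥𝒰 → Set (Set X) := fun U => {V | IsOpen V ∧ V ×ˢ V ⊆ (U : Set (X × X))}
  have hop : ∀ U : ↥𝒰, ∀ O ∈ 𝒪 U, IsOpen O := fun U O hO => hO.1
  have hcov : ∀ (U : ↥𝒰) (x : X), ∃ O ∈ 𝒪 U, x ∈ O := by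
    rintro ⟨U, hU⟩ x
    have hxx : (x, x) ∈ U := by
      have hd : (x, x) ∈ Set.diagonal X := rfl
      rw [← hUd] at hd
      exact hd U hU
    obtain ⟨V, W, hVo, hWo, hxV, hxW, hVW⟩ := isOpen_prod_iff.1 (hUo U hU) x x hxx
    refine ⟨V ∩ W, ⟨hVo.inter hWo, ?_⟩, hxV, hxW⟩
    exact (Set.prod_mono Set.inter_subset_left Set.inter_subset_right).trans hVW
  have hsep : ∀ x y : X, (∀ U : ↥𝒰, y ∈ SetStar {x} (𝒪 U)) → y = x := by
    intro x y h
    have hxy : (x, y) ∈ ⋂₀ 𝒰 := by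
      rintro U hU
      obtain ⟨O, hO, hxO, hyO⟩ := mem_setStar_singleton.1 (h ⟨U, hU⟩)
      exact hO.2 (Set.mk_mem_prod hxO hyO)
    rw [hUd] at hxy
    exact hxy.symm
  haveI : CompactSpace X := compactSpace_of_covers hκ hX hUc 𝒪 hop hcov hsep
  exact weight_le_of_compact hκ hUo hUc hUd
end

section
/- Let κ be an infinite cardinal and let G be a topological group. If G is initially κ-compact and every singleton {x} ⊆ G is the intersection of at most κ-many open subsets of G (that is, the pseudocharacter ψ(G) is at most κ), then G is compact. -/
open Set Cardinal Pointwise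

universe u

/-- FIP version of initial κ-compactness. -/
theorem aux_fip {X : Type u} [TopologicalSpace X] {κ : Cardinal.{u}}
    (hG : InitiallyCompact X κ) (𝒜 : Set (Set X)) (hcard : #𝒜 ≤ κ)
    (hcl : ∀ A ∈ 𝒜, IsClosed A)
    (hfip : ∀ F ⊆ 𝒜, F.Finite → (⋂₀ F).Nonempty) : (⋂₀ 𝒜).Nonempty := by
  by_contra h
  rw [Set.not_nonempty_iff_eq_empty] at h
  obtain ⟨F, hF𝒞, hFfin, hFuniv⟩ := hG (compl '' 𝒜)
    (by rintro U ⟨A, hA, rfl⟩; exact (hcl A hA).isOpen_compl)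
    (by rw [← compl_sInter, h, Set.compl_empty])
    (le_trans mk_image_le hcard)
  have h1 : compl '' F ⊆ 𝒜 := by
    rintro A ⟨B, hB, rfl⟩
    obtain ⟨C, hC, rfl⟩ := hF𝒞 hB
    rwa [compl_compl]
  have h2 := hfip _ h1 (hFfin.image _)
  rw [← compl_sUnion, hFuniv, Set.compl_univ] at h2
  exact Set.not_nonempty_empty h2

/-- Extraction of symmetric neighborhoods. -/
theorem aux_sym {G : Type u} [Group G] [TopologicalSpace G] [IsTopologicalGroup G]
    {U : Set G} (h : U ∈ nhds (1 : G)) :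
    ∃ V : Set G, IsOpen V ∧ (1 : G) ∈ V ∧ V⁻¹ = V ∧ V * V ⊆ U := by
  obtain ⟨W, hWo, hW1, hWU⟩ := exists_open_nhds_one_mul_subset h
  refine ⟨W ∩ W⁻¹, hWo.inter hWo.inv, ⟨hW1, by simpa using hW1⟩, ?_, ?_⟩
  · rw [Set.inter_inv, inv_inv, Set.inter_comm]
  · exact subset_trans (Set.mul_subset_mul inter_subset_left inter_subset_left) hWU

/-- Closure is contained in thickening by a symmetric neighborhood of 1. -/
theorem aux_clos {G : Type u} [Group G] [TopologicalSpace G] [IsTopologicalGroup G]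
    (A V : Set G) (hVo : IsOpen V) (hV1 : (1 : G) ∈ V) (hVs : V⁻¹ = V) :
    closure A ⊆ A * V := by
  intro z hz
  obtain ⟨a, haz, haA⟩ := mem_closure_iff.mp hz (z • V) (hVo.smul z) ⟨1, hV1, mul_one z⟩
  obtain ⟨v, hvV, hv⟩ := haz
  refine ⟨a, haA, v⁻¹, ?_, ?_⟩
  · rw [← hVs]; exact Set.inv_mem_inv.mpr hvV
  · simp only [smul_eq_mul] at hv
    rw [← hv]; group

/-- A countably compact (here: initially κ-compact, κ ≥ ℵ₀) T1 topological group is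
totally bounded: finitely many translates of any symmetric open nbhd of 1 cover. -/
theorem aux_precpt {G : Type u} [Group G] [TopologicalSpace G] [IsTopologicalGroup G]
    [T1Space G] {κ : Cardinal.{u}} (hκ : ℵ₀ ≤ κ) (hG : InitiallyCompact G κ)
    (V : Set G) (hVo : IsOpen V) (hV1 : (1 : G) ∈ V) (hVs : V⁻¹ = V) :
    ∃ T : Finset G, ⋃ g ∈ T, g • V = Set.univ := by
  classical
  by_contra h
  push_neg at h
  have key : ∀ T : Finset G, ∃ y : G, ∀ g ∈ T, y ∉ g • V := by
    intro T
    by_contra hc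
    push_neg at hc
    refine h T (Set.eq_univ_of_forall fun y => ?_)
    obtain ⟨g, hgT, hgy⟩ := hc y
    exact Set.mem_biUnion hgT hgy
  choose pick hpick using key
  set S : ℕ → Finset G := fun n => Nat.rec ∅ (fun _ s => insert (pick s) s) n with hS
  set x : ℕ → G := fun n => pick (S n) with hx
  have hSmono : ∀ m n, m ≤ n → S m ⊆ S n := by
    intro m n hmn
    induction n with
    | zero => simp [Nat.le_zero.mp hmn]
    | succ k ih =>
      rcases Nat.lt_or_ge m (k+1) with h' | h'
      · exact (ih (Nat.lt_succ_iff.mp h')).trans (Finset.subset_insert _ _)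
      · simp [Nat.le_antisymm hmn h']
  have hxS : ∀ m n, m < n → x m ∈ S n := by
    intro m n hmn
    have h1 : x m ∈ S (m + 1) := Finset.mem_insert_self _ _
    exact hSmono (m+1) n hmn h1
  have hsep : ∀ m n, m < n → x n ∉ x m • V := fun m n hmn => hpick (S n) _ (hxS m n hmn)
  have hsep' : ∀ m n, m ≠ n → x n ∉ x m • V := by
    intro m n hmn hmem
    rcases Nat.lt_or_ge m n with h' | h'
    · exact hsep m n h' hmem
    · have h'' : n < m := lt_of_le_of_ne h' (Ne.symm hmn)
      refine hsep n m h'' ?_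
      rw [Set.mem_smul_set_iff_inv_smul_mem] at hmem ⊢
      simp only [smul_eq_mul] at hmem ⊢
      rw [← hVs]
      simpa using Set.inv_mem_inv.mpr hmem
  have hinj : Function.Injective x := by
    intro m n hmn
    by_contra hne
    exact hsep' n m (Ne.symm hne) (hmn ▸ ⟨1, hV1, mul_one _⟩)
  obtain ⟨W, hWo, hW1, hWs, hWV⟩ := aux_sym (hVo.mem_nhds hV1)
  have hsep2 : ∀ (g : G) (m n : ℕ), x m ∈ g • W → x n ∈ g • W → m = n := by
    intro g m n hm hn
    by_contra hne
    obtain ⟨w1, hw1, hw1e⟩ := hm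
    obtain ⟨w2, hw2, hw2e⟩ := hn
    refine hsep' m n hne ⟨w1⁻¹ * w2, hWV ⟨w1⁻¹, by rw [← hWs]; exact Set.inv_mem_inv.mpr hw1,
      w2, hw2, rfl⟩, ?_⟩
    simp only [smul_eq_mul] at hw1e hw2e ⊢
    rw [← hw1e, ← hw2e]
    group
  set D : Set G := Set.range x with hD
  have hUopen : ∀ n, IsOpen ((D \ {x n})ᶜ) := by
    intro n
    rw [isOpen_iff_forall_mem_open]
    intro g hg
    by_cases hcase : ∃ m, x m ∈ g • W ∧ x m ≠ x n
    · obtain ⟨m, hmW, hmn⟩ := hcase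
      have hgne : g ∉ ({x m} : Set G) := by
        intro hgm
        simp only [Set.mem_singleton_iff] at hgm
        exact hg ⟨hgm ▸ ⟨m, rfl⟩, by simpa [hgm] using hmn⟩
      have hsub : g • W ∩ {x m}ᶜ ⊆ (D \ {x n})ᶜ := by
        rintro y ⟨hyW, hym⟩ ⟨⟨k, rfl⟩, hyn⟩
        refine hym ?_
        rw [hsep2 g k m hyW hmW]
        exact rfl
      exact ⟨g • W ∩ {x m}ᶜ, hsub, (hWo.smul g).inter isOpen_compl_singleton,
        ⟨⟨1, hW1, mul_one g⟩, hgne⟩⟩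
    · push_neg at hcase
      refine ⟨g • W, ?_, hWo.smul g, ⟨1, hW1, mul_one g⟩⟩
      rintro y hyW ⟨⟨k, rfl⟩, hyn⟩
      exact hyn (hcase k hyW)
  obtain ⟨F, hFsub, hFfin, hFuniv⟩ := hG (Set.range (fun n => (D \ {x n})ᶜ))
    (by rintro U ⟨n, rfl⟩; exact hUopen n)
    (by
      apply Set.eq_univ_of_forall
      intro g
      by_cases hgD : g ∈ D
      · obtain ⟨n, rfl⟩ := hgD
        exact ⟨(D \ {x n})ᶜ, ⟨n, rfl⟩, fun hc => hc.2 rfl⟩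
      · exact ⟨(D \ {x 0})ᶜ, ⟨0, rfl⟩, fun hc => hgD hc.1⟩)
    (le_trans (by
      have hc : (Set.range fun n => (D \ {x n})ᶜ).Countable := Set.countable_range _
      haveI := hc.to_subtype
      exact mk_le_aleph0) hκ)
  haveI : Finite ↥F := hFfin.to_subtype
  have hidx : ∀ A : ↥F, ∃ n, (D \ {x n})ᶜ = ↑A := fun A => hFsub A.2
  choose idx hidx using hidx
  obtain ⟨n, hn⟩ := (Set.finite_range idx).infinite_compl.nonempty
  have hxn : x n ∈ ⋃₀ F := hFuniv ▸ Set.mem_univ _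
  obtain ⟨A, hAF, hxA⟩ := hxn
  have hk : (D \ {x (idx ⟨A, hAF⟩)})ᶜ = A := hidx ⟨A, hAF⟩
  rw [← hk] at hxA
  refine hxA ⟨⟨n, rfl⟩, ?_⟩
  intro heq
  have : idx ⟨A, hAF⟩ = n := hinj (by simpa using heq.symm)
  exact hn ⟨⟨A, hAF⟩, this⟩

set_option maxHeartbeats 2000000 in
/-- An initially `κ`-compact topological group in which every singleton is the
intersection of at most `κ`-many open sets (pseudocharacter at most `κ`) is compact. -/
theorem initiallyCompact_topologicalGroup_compact {G : Type u} [Group G] [TopologicalSpace G]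
    [IsTopologicalGroup G] (κ : Cardinal.{u}) (hκ : ℵ₀ ≤ κ) (hG : InitiallyCompact G κ)
    (hψ : ∀ x : G, ∃ 𝒰 : Set (Set G), (∀ U ∈ 𝒰, IsOpen U) ∧ #𝒰 ≤ κ ∧ ⋂₀ 𝒰 = {x}) :
    CompactSpace G := by
  classical
  haveI : T1Space G := by
    rw [t1Space_iff_exists_open]
    intro a b hab
    obtain ⟨𝒰, hopen, -, hint⟩ := hψ a
    have hbn : b ∉ ⋂₀ 𝒰 := by rw [hint]; simpa using hab.symm
    rw [Set.mem_sInter] at hbn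
    push_neg at hbn
    obtain ⟨U, hU, hbU⟩ := hbn
    have ha : a ∈ ⋂₀ 𝒰 := by rw [hint]; rfl
    exact ⟨U, hopen U hU, Set.mem_sInter.mp ha U hU, hbU⟩
  obtain ⟨𝒰, hUopen, hUcard, hUint⟩ := hψ 1
  have h1U : ∀ U : ↥𝒰, (1 : G) ∈ (U : Set G) := by
    intro U
    have : (1 : G) ∈ ⋂₀ 𝒰 := by rw [hUint]; rfl
    exact Set.mem_sInter.mp this U U.2
  have hc : ∀ U : ↥𝒰, ∃ V : Set G, IsOpen V ∧ (1:G) ∈ V ∧ V⁻¹ = V ∧ V * V ⊆ (U : Set G) :=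
    fun U => aux_sym ((hUopen U U.2).mem_nhds (h1U U))
  choose c hcopen hc1 hcsym hcmul using hc
  set B : Finset ↥𝒰 → Set G := fun s => ⋂ U ∈ s, c U with hB
  have hBopen : ∀ s, IsOpen (B s) := fun s => isOpen_biInter_finset fun U _ => hcopen U
  have hB1 : ∀ s, (1:G) ∈ B s := fun s => Set.mem_iInter₂.mpr fun U _ => hc1 U
  have hBsymm : ∀ s g, g ∈ B s → g⁻¹ ∈ B s := by
    intro s g hg
    simp only [hB, Set.mem_iInter] at hg ⊢
    intro U hU
    rw [← hcsym U]
    exact Set.inv_mem_inv.mpr (hg U hU)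
  have hBsym : ∀ s, (B s)⁻¹ = B s := by
    intro s
    ext g
    constructor
    · intro hg
      have := hBsymm s g⁻¹ (Set.mem_inv.mp hg)
      simpa using this
    · intro hg
      exact Set.mem_inv.mpr (hBsymm s g hg)
  have hFinsetCard : #(Finset ↥𝒰) ≤ κ := by
    rcases finite_or_infinite ↥𝒰 with hf | hi
    · exact le_trans mk_le_aleph0 hκ
    · exact le_of_eq_of_le (mk_finset_of_infinite _) hUcard
  -- ℬ = range B is a neighborhood base at 1
  have hbase : ∀ W : Set G, IsOpen W → (1:G) ∈ W → ∃ s, B s ⊆ W := by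
    intro W hWo hW1
    by_contra hcon
    push_neg at hcon
    have hne : ∀ s, (B s \ W).Nonempty := by
      intro s
      obtain ⟨y, hy1, hy2⟩ := Set.not_subset.mp (hcon s)
      exact ⟨y, hy1, hy2⟩
    have hfip : ∀ F ⊆ (Set.range fun s => closure (B s) \ W), F.Finite → (⋂₀ F).Nonempty := by
      intro F hFsub hFfin
      haveI : Finite ↥F := hFfin.to_subtype
      have hidx : ∀ A : ↥F, ∃ s, closure (B s) \ W = ↑A := fun A => hFsub A.2
      choose idx hidx using hidx
      set t : Finset ↥𝒰 := (Set.finite_range idx).toFinset.sup id with ht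
      have hsubt : ∀ A : ↥F, idx A ⊆ t := by
        intro A
        have hmem' : idx A ∈ (Set.finite_range idx).toFinset := by
          rw [Set.Finite.mem_toFinset]; exact ⟨A, rfl⟩
        have hle : id (idx A) ≤ t := Finset.le_sup hmem'
        simpa using hle
      obtain ⟨y, hy1, hy2⟩ := hne t
      refine ⟨y, Set.mem_sInter.mpr fun A hA => ?_⟩
      have h4 : closure (B (idx ⟨A, hA⟩)) \ W = A := hidx ⟨A, hA⟩
      rw [← h4]
      have h5 : B t ⊆ B (idx ⟨A, hA⟩) := by
        intro w hw
        simp only [hB, Set.mem_iInter] at hw ⊢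
        intro U hU
        exact hw U (hsubt ⟨A, hA⟩ hU)
      exact ⟨subset_closure (h5 hy1), hy2⟩
    obtain ⟨z, hz⟩ := aux_fip hG (Set.range fun s => closure (B s) \ W)
      (le_trans mk_range_le hFinsetCard)
      (by rintro A ⟨s, rfl⟩; exact isClosed_closure.sdiff hWo) hfip
    have hz1 : z ∈ ⋂₀ 𝒰 := by
      rw [Set.mem_sInter]
      intro U hU
      have h1 : z ∈ closure (B {⟨U, hU⟩}) \ W := by
        apply Set.mem_sInter.mp hz
        exact Set.mem_range_self _
      have h2 : B {⟨U, hU⟩} ⊆ c ⟨U, hU⟩ := by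
        intro w hw
        simp only [hB, Set.mem_iInter] at hw
        exact hw ⟨U, hU⟩ (Finset.mem_singleton_self _)
      have h3 := aux_clos (c ⟨U, hU⟩) (c ⟨U, hU⟩) (hcopen _) (hc1 _) (hcsym _)
      have h4 : z ∈ closure (c ⟨U, hU⟩) := closure_mono h2 h1.1
      exact hcmul ⟨U, hU⟩ (h3 h4)
    rw [hUint, Set.mem_singleton_iff] at hz1
    have hzW' : z ∈ closure (B (∅ : Finset ↥𝒰)) \ W := by
      apply Set.mem_sInter.mp hz
      exact Set.mem_range_self _
    have hzW : z ∉ W := hzW'.2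
    exact hzW (hz1 ▸ hW1)
  -- the ultrafilter argument
  refine ⟨?_⟩
  rw [isCompact_iff_ultrafilter_le_nhds]
  intro f _
  have hcover : ∀ s : Finset ↥𝒰, ∃ g : G, g • B s ∈ f := by
    intro s
    obtain ⟨T, hT⟩ := aux_precpt hκ hG (B s) (hBopen s) (hB1 s) (hBsym s)
    have hmem : (⋃ g ∈ T, g • B s) ∈ f := by rw [hT]; exact Filter.univ_mem
    obtain ⟨g, hgT, hgf⟩ := (Ultrafilter.finite_biUnion_mem_iff T.finite_toSet).mp hmem
    exact ⟨g, hgf⟩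
  choose gg hgg using hcover
  obtain ⟨z, hz⟩ := aux_fip hG (Set.range fun s => closure (gg s • B s))
    (le_trans mk_range_le hFinsetCard)
    (by rintro A ⟨s, rfl⟩; exact isClosed_closure)
    (by
      intro F hFsub hFfin
      have hf : ⋂₀ F ∈ (f : Filter G) := by
        rw [Filter.sInter_mem hFfin]
        intro A hA
        obtain ⟨s, rfl⟩ := hFsub hA
        exact Filter.mem_of_superset (hgg s) subset_closure
      exact Ultrafilter.nonempty_of_mem hf)
  refine ⟨z, Set.mem_univ z, fun W hW => ?_⟩
  obtain ⟨W', hW'sub, hW'o, hzW'⟩ := mem_nhds_iff.mp hW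
  have h1 : (1:G) ∈ z⁻¹ • W' := ⟨z, hzW', by simp [smul_eq_mul]⟩
  obtain ⟨s₀, hs₀⟩ := hbase (z⁻¹ • W') (hW'o.smul z⁻¹) h1
  obtain ⟨V₁, hV₁o, hV₁1, hV₁s, hV₁m⟩ := aux_sym ((hBopen s₀).mem_nhds (hB1 s₀))
  obtain ⟨V₂, hV₂o, hV₂1, hV₂s, hV₂m⟩ := aux_sym (hV₁o.mem_nhds hV₁1)
  obtain ⟨s, hs⟩ := hbase V₂ hV₂o hV₂1
  have hcube : ∀ a b d : G, a ∈ B s → b ∈ B s → d ∈ B s → a * b * d ∈ B s₀ := by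
    intro a b d ha hb hd
    have h2 : a * b ∈ V₁ := hV₂m ⟨a, hs ha, b, hs hb, rfl⟩
    have h3 : d ∈ V₁ := hV₂m ⟨d, hs hd, 1, hV₂1, mul_one d⟩
    exact hV₁m ⟨a * b, h2, d, h3, rfl⟩
  have hzc : z ∈ (gg s • B s) * B s := by
    have hmem : z ∈ closure (gg s • B s) := by
      apply Set.mem_sInter.mp hz
      exact Set.mem_range_self _
    exact aux_clos _ _ (hBopen s) (hB1 s) (hBsym s) hmem
  obtain ⟨p, hp, b₂, hb₂, hpz⟩ := hzc
  obtain ⟨b₁, hb₁, hpe⟩ := hp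
  have hsubW : gg s • B s ⊆ W := by
    intro y hy
    obtain ⟨b₃, hb₃, hye⟩ := hy
    have hyz : y = z * (b₂⁻¹ * b₁⁻¹ * b₃) := by
      simp only [smul_eq_mul] at hpe hye hpz
      rw [← hye, ← hpz, ← hpe]
      group
    have hmem : b₂⁻¹ * b₁⁻¹ * b₃ ∈ B s₀ :=
      hcube b₂⁻¹ b₁⁻¹ b₃ (hBsymm s b₂ hb₂) (hBsymm s b₁ hb₁) hb₃
    have hzb : z * (b₂⁻¹ * b₁⁻¹ * b₃) ∈ W' := by
      obtain ⟨w, hw, hwe⟩ := hs₀ hmem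
      simp only [smul_eq_mul] at hwe
      have hwz : w = z * (b₂⁻¹ * b₁⁻¹ * b₃) := by rw [← hwe]; group
      rwa [← hwz]
    exact hW'sub (hyz ▸ hzb)
  exact Filter.mem_of_superset (hgg s) hsubW
end

section
/- Let κ be an infinite cardinal, let X be an initially κ-compact topological space, let {𝒪_α : α < κ} be a quasi-G_κ-diagonal sequence for X, and let ℳ be an open cover of X with no finite subcover that is maximal, i.e., for every open subset O of X with O ∉ ℳ the cover ℳ ∪ {O} has a finite subcover. Then for every x ∈ X there exists α < κ such that x ∈ ⋃𝒪_α and st(x, 𝒪_α) ∈ ℳ. -/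
open Set Cardinal

universe u

/-- In an initially `κ`-compact space with a quasi-`G_κ`-diagonal sequence, if `ℳ` is a
maximal open cover without a finite subcover, then every `x` admits `α < κ` with
`x ∈ ⋃ 𝒪_α` and `st(x, 𝒪_α) ∈ ℳ`. -/
theorem exists_star_mem_maximal_cover {X : Type u} [TopologicalSpace X]
    (κ : Cardinal.{u}) (hκ : ℵ₀ ≤ κ) (hX : InitiallyCompact X κ)
    (𝒪 : κ.ord.ToType → Set (Set X)) (h𝒪 : IsQuasiGDiagonalSeq κ 𝒪)
    (ℳ : Set (Set X)) (hMopen : ∀ M ∈ ℳ, IsOpen M) (hMcover : ⋃₀ ℳ = Set.univ)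
    (hMnofin : ¬ ∃ F ⊆ ℳ, F.Finite ∧ ⋃₀ F = Set.univ)
    (hMmax : ∀ O : Set X, IsOpen O → O ∉ ℳ →
      ∃ F ⊆ insert O ℳ, F.Finite ∧ ⋃₀ F = Set.univ) :
    ∀ x : X, ∃ α, x ∈ ⋃₀ 𝒪 α ∧ SetStar {x} (𝒪 α) ∈ ℳ := by
  intro x
  by_contra hcon
  push_neg at hcon
  have key : ∀ α, ∃ G : Set (Set X), G ⊆ ℳ ∧ G.Finite ∧
      (x ∈ ⋃₀ 𝒪 α → ∀ y, y ∉ SetStar {x} (𝒪 α) → y ∈ ⋃₀ G) := by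
    intro α
    by_cases hx : x ∈ ⋃₀ 𝒪 α
    · have hopen : IsOpen (SetStar {x} (𝒪 α)) :=
        isOpen_sUnion fun O hO => h𝒪.1 α O hO.1
      obtain ⟨F, hF, hFfin, hFcov⟩ := hMmax _ hopen (hcon α hx)
      refine ⟨F \ {SetStar {x} (𝒪 α)}, ?_, hFfin.diff, fun _ y hy => ?_⟩
      · intro M hM
        rcases hF hM.1 with h | h
        · exact absurd h hM.2
        · exact h
      · have hyF : y ∈ ⋃₀ F := hFcov ▸ mem_univ y
        obtain ⟨M, hMF, hyM⟩ := hyF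
        exact ⟨M, ⟨hMF, fun h => hy (h ▸ hyM)⟩, hyM⟩
    · exact ⟨∅, empty_subset _, finite_empty, fun h => absurd h hx⟩
  choose G hGsub hGfin hGcov using key
  obtain ⟨M₀, hM₀, hxM₀⟩ : x ∈ ⋃₀ ℳ := hMcover ▸ mem_univ x
  set 𝒢 : Set (Set X) := insert M₀ (⋃ α, G α) with h𝒢
  have h𝒢sub : 𝒢 ⊆ ℳ := by
    intro M hM
    rcases hM with rfl | hM
    · exact hM₀
    · obtain ⟨_, ⟨α, rfl⟩, hM⟩ := hM
      exact hGsub α hM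
  have h𝒢cov : ⋃₀ 𝒢 = Set.univ := by
    apply eq_univ_of_forall
    intro y
    by_cases hyx : y = x
    · exact ⟨M₀, mem_insert _ _, hyx ▸ hxM₀⟩
    · obtain ⟨α, hxα, hyα⟩ := h𝒪.2 x y (Ne.symm hyx)
      obtain ⟨M, hMG, hyM⟩ := hGcov α hxα y hyα
      exact ⟨M, mem_insert_of_mem _ (mem_iUnion.2 ⟨α, hMG⟩), hyM⟩
  have hcard : #𝒢 ≤ κ := by
    have h1 : #(⋃ α, G α) ≤ κ := by
      calc #(⋃ α, G α) ≤ #(κ.ord.ToType) * ⨆ α, #(G α) := mk_iUnion_le _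
        _ ≤ κ * ℵ₀ := by
            rw [mk_ord_toType]
            exact mul_le_mul_right (ciSup_le' fun α => (hGfin α).lt_aleph0.le) κ
        _ = κ := mul_aleph0_eq hκ
    calc #𝒢 ≤ #({M₀} ∪ ⋃ α, G α : Set (Set X)) := by
          apply mk_le_mk_of_subset
          rw [singleton_union]
      _ ≤ #({M₀} : Set (Set X)) + #(⋃ α, G α) := mk_union_le _ _
      _ ≤ κ + κ := by
          apply add_le_add _ h1
          simp only [mk_singleton]
          exact one_le_aleph0.trans hκ
      _ = κ := add_eq_self hκ
  obtain ⟨F, hFsub, hFfin, hFcov⟩ :=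
    hX 𝒢 (fun U hU => hMopen U (h𝒢sub hU)) h𝒢cov hcard
  exact hMnofin ⟨F, hFsub.trans h𝒢sub, hFfin, hFcov⟩
end

section
/- Let κ be an infinite cardinal, let X be an initially κ-compact topological space, let {𝒪_α : α < κ} be a quasi-G_κ-diagonal sequence for X, and let ℳ be an open cover of X with no finite subcover that is maximal, i.e., for every open subset O of X with O ∉ ℳ the cover ℳ ∪ {O} has a finite subcover. Suppose α : X → κ satisfies, for every x ∈ X, that x ∈ ⋃𝒪_{α(x)} and st(x, 𝒪_{α(x)}) ∈ ℳ. Then for every β < κ the set Y_β = {x ∈ X : α(x) = β} is covered by finitely many members of ℳ. -/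
open Set Cardinal

universe u

/-- With `ℳ` a maximal open cover without a finite subcover of an initially `κ`-compact
space with a quasi-`G_κ`-diagonal sequence, and `a : X → κ` with `x ∈ ⋃ 𝒪_{a x}` and
`st(x, 𝒪_{a x}) ∈ ℳ` for all `x`, every level set `Y_β = {x | a x = β}` is covered by
finitely many members of `ℳ`. -/
theorem level_sets_finitely_covered {X : Type u} [TopologicalSpace X]
    (κ : Cardinal.{u}) (hκ : ℵ₀ ≤ κ) (hX : InitiallyCompact X κ)
    (𝒪 : κ.ord.ToType → Set (Set X)) (h𝒪 : IsQuasiGDiagonalSeq κ 𝒪)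
    (ℳ : Set (Set X)) (hMopen : ∀ M ∈ ℳ, IsOpen M) (hMcover : ⋃₀ ℳ = Set.univ)
    (hMnofin : ¬ ∃ F ⊆ ℳ, F.Finite ∧ ⋃₀ F = Set.univ)
    (hMmax : ∀ O : Set X, IsOpen O → O ∉ ℳ →
      ∃ F ⊆ insert O ℳ, F.Finite ∧ ⋃₀ F = Set.univ)
    (a : X → κ.ord.ToType)
    (ha : ∀ x : X, x ∈ ⋃₀ 𝒪 (a x) ∧ SetStar {x} (𝒪 (a x)) ∈ ℳ) :
    ∀ β : κ.ord.ToType, ∃ F ⊆ ℳ, F.Finite ∧ {x : X | a x = β} ⊆ ⋃₀ F := by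
  intro β
  have hGopen : IsOpen (⋃₀ 𝒪 β) := isOpen_sUnion (h𝒪.1 β)
  have hYsub : {x : X | a x = β} ⊆ ⋃₀ 𝒪 β := by
    intro x hx
    have hx' : a x = β := hx
    have h1 := (ha x).1
    rwa [hx'] at h1
  by_cases hG : ⋃₀ 𝒪 β ∈ ℳ
  · exact ⟨{⋃₀ 𝒪 β}, singleton_subset_iff.2 hG, finite_singleton _,
      fun x hx => ⟨_, mem_singleton _, hYsub hx⟩⟩
  obtain ⟨F₀, hF₀sub, hF₀fin, hF₀cov⟩ := hMmax _ hGopen hG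
  set F : Set (Set X) := F₀ \ {⋃₀ 𝒪 β} with hFdef
  have hFM : F ⊆ ℳ := by
    intro s hs
    rcases Set.mem_insert_iff.mp (hF₀sub hs.1) with h | h
    · exact absurd h hs.2
    · exact h
  have hFfin : F.Finite := hF₀fin.subset diff_subset
  have hcovF : ∀ p : X, p ∈ ⋃₀ 𝒪 β ∨ p ∈ ⋃₀ F := by
    intro p
    have hp : p ∈ ⋃₀ F₀ := hF₀cov ▸ mem_univ p
    obtain ⟨s, hsF₀, hps⟩ := hp
    by_cases hs : s = ⋃₀ 𝒪 β
    · left; exact hs ▸ hps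
    · right; exact ⟨s, ⟨hsF₀, by simpa using hs⟩, hps⟩
  by_contra hno
  -- key choice step
  have key : ∀ lst : List X,
      ∃ z, a z = β ∧ z ∉ ⋃₀ F ∧ ∀ y ∈ lst, a y = β → z ∉ SetStar {y} (𝒪 β) := by
    intro lst
    set T : Set (Set X) := F ∪ (fun y => SetStar {y} (𝒪 β)) '' {y | y ∈ lst ∧ a y = β} with hT
    have hTM : T ⊆ ℳ := by
      rintro s (hs | ⟨y, hy, rfl⟩)
      · exact hFM hs
      · have h2 := (ha y).2
        rwa [hy.2] at h2
    have hTfin : T.Finite :=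
      hFfin.union (((lst.finite_toSet).subset (fun y hy => hy.1)).image _)
    have hns : ¬ ({x : X | a x = β} ⊆ ⋃₀ T) := fun hsub => hno ⟨T, hTM, hTfin, hsub⟩
    obtain ⟨z, hz, hzT⟩ := Set.not_subset.mp hns
    refine ⟨z, hz, ?_, ?_⟩
    · rintro ⟨s, hsF, hzs⟩
      exact hzT ⟨s, Or.inl hsF, hzs⟩
    · intro y hy hay hz'
      exact hzT ⟨_, Or.inr ⟨y, ⟨hy, hay⟩, rfl⟩, hz'⟩
  choose z hz1 hz2 hz3 using key
  let l : ℕ → List X := fun n => Nat.rec [] (fun _ ih => z ih :: ih) n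
  have hlsucc : ∀ n, l (n + 1) = z (l n) :: l n := fun n => rfl
  have hlβ : ∀ n, ∀ y ∈ l n, a y = β := by
    intro n
    induction n with
    | zero => intro y hy; exact absurd hy List.not_mem_nil
    | succ n ih =>
      intro y hy
      rw [hlsucc] at hy
      rcases List.mem_cons.mp hy with h | h
      · subst h; exact hz1 _
      · exact ih y h
  set x : ℕ → X := fun n => z (l n) with hxdef
  have hx1 : ∀ n, a (x n) = β := fun n => hz1 _
  have hx2 : ∀ n, x n ∉ ⋃₀ F := fun n => hz2 _
  have hx3 : ∀ n, ∀ y ∈ l n, x n ∉ SetStar {y} (𝒪 β) :=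
    fun n y hy => hz3 (l n) y hy (hlβ n y hy)
  have hmem : ∀ m n, m < n → x m ∈ l n := by
    intro m n h
    induction n with
    | zero => omega
    | succ n ih =>
      rw [hlsucc]
      rcases Nat.lt_succ_iff_lt_or_eq.mp h with h' | h'
      · exact List.mem_cons_of_mem _ (ih h')
      · subst h'; exact List.mem_cons_self
  have hsep : ∀ m n, m < n → x n ∉ SetStar {x m} (𝒪 β) :=
    fun m n h => hx3 n _ (hmem m n h)
  have hatom : ∀ O ∈ 𝒪 β, ∀ m n, m < n → x m ∈ O → x n ∈ O → False := by
    intro O hO m n h hm hn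
    exact hsep m n h ⟨O, ⟨hO, ⟨x m, hm, rfl⟩⟩, hn⟩
  -- tails and cluster point
  set C : ℕ → Set X := fun n => closure (x '' Set.Ici n) with hCdef
  have hCclosed : ∀ n, IsClosed (C n) := fun n => isClosed_closure
  have hCanti : ∀ m n : ℕ, m ≤ n → C n ⊆ C m :=
    fun m n h => closure_mono (image_mono (Ici_subset_Ici.mpr h))
  have hxC : ∀ n, x n ∈ C n := fun n => subset_closure ⟨n, le_refl n, rfl⟩
  have hp : ∃ p, ∀ n, p ∈ C n := by
    by_contra h
    push_neg at h
    obtain ⟨F', hF'sub, hF'fin, hF'cov⟩ := hX (Set.range fun n => (C n)ᶜ)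
      (by rintro U ⟨n, rfl⟩; exact (hCclosed n).isOpen_compl)
      (by
        ext p
        simp only [mem_univ, iff_true]
        obtain ⟨n, hn⟩ := h p
        exact ⟨(C n)ᶜ, ⟨n, rfl⟩, hn⟩)
      (le_trans (Cardinal.mk_le_aleph0_iff.mpr (Set.countable_range _).to_subtype) hκ)
    have hidx : ∀ c ∈ F', ∃ n : ℕ, c = (C n)ᶜ := by
      intro c hc
      obtain ⟨n, hn⟩ := hF'sub hc
      exact ⟨n, hn.symm⟩
    choose! idx hidxeq using hidx
    obtain ⟨N, hN⟩ := (hF'fin.image idx).bddAbove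
    have hxN : x N ∈ ⋃₀ F' := hF'cov ▸ mem_univ _
    obtain ⟨c, hcF', hxc⟩ := hxN
    have hcsub : c ⊆ (C N)ᶜ := by
      rw [hidxeq c hcF']
      intro q hq hqC
      exact hq (hCanti (idx c) N (hN ⟨c, hcF', rfl⟩) hqC)
    exact hcsub hxc (hxC N)
  obtain ⟨p, hpC⟩ := hp
  rcases hcovF p with hpG | hpF
  · obtain ⟨O, hO, hpO⟩ := hpG
    have hOopen : IsOpen O := h𝒪.1 β O hO
    obtain ⟨q, hqO, i, hi, rfl⟩ := (mem_closure_iff.mp (hpC 0)) O hOopen hpO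
    obtain ⟨q', hq'O, j, hj, rfl⟩ := (mem_closure_iff.mp (hpC (i + 1))) O hOopen hpO
    exact hatom O hO i j (by exact hj) hqO hq'O
  · obtain ⟨M, hMF, hpM⟩ := hpF
    have hMopen' : IsOpen M := hMopen M (hFM hMF)
    obtain ⟨q, hqM, i, hi, rfl⟩ := (mem_closure_iff.mp (hpC 0)) M hMopen' hpM
    exact hx2 i ⟨M, hMF, hqM⟩
end

section
/- Let X be a countably compact topological space, let 𝒪 be a family of open subsets of X, and let C be a closed subset of X with C ⊆ ⋃𝒪. If D ⊆ C is a set such that for all distinct x, y ∈ D one has y ∉ st(x, 𝒪), then D is finite. -/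
open Set Cardinal

universe u

/-- In a countably compact space, if `C` is a closed set covered by a family `𝒪` of open
sets, then any `D ⊆ C` whose distinct points `x, y` satisfy `y ∉ st(x, 𝒪)` is finite. -/
theorem finite_of_star_discrete {X : Type u} [TopologicalSpace X]
    (hcc : ∀ 𝒞 : Set (Set X), 𝒞.Countable → (∀ U ∈ 𝒞, IsOpen U) → ⋃₀ 𝒞 = Set.univ →
      ∃ F ⊆ 𝒞, F.Finite ∧ ⋃₀ F = Set.univ)
    (𝒪 : Set (Set X)) (h𝒪 : ∀ O ∈ 𝒪, IsOpen O)
    (C : Set X) (hCclosed : IsClosed C) (hCsub : C ⊆ ⋃₀ 𝒪)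
    (D : Set X) (hDC : D ⊆ C)
    (hD : ∀ x ∈ D, ∀ y ∈ D, x ≠ y → y ∉ SetStar {x} 𝒪) :
    D.Finite := by
  by_contra hDfin
  rw [← Set.not_infinite, not_not] at hDfin
  -- each O ∈ 𝒪 contains at most one point of D
  have hOne : ∀ O ∈ 𝒪, ∀ a ∈ D, a ∈ O → ∀ b ∈ D, b ∈ O → a = b := by
    intro O hO a haD haO b hbD hbO
    by_contra hab
    exact hD a haD b hbD hab ⟨O, ⟨hO, ⟨a, haO, rfl⟩⟩, hbO⟩
  -- an injective sequence in D
  obtain e := hDfin.natEmbedding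
  set x : ℕ → X := fun n => (e n : X) with hx
  have hxD : ∀ n, x n ∈ D := fun n => (e n).2
  have hxinj : Function.Injective x := by
    intro a b h
    exact e.injective (Subtype.ext h)
  -- tails and their closures
  set T : ℕ → Set X := fun n => {y | ∃ m, n ≤ m ∧ y = x m} with hT
  set A : ℕ → Set X := fun n => closure (T n) with hA
  have hTA : ∀ n, T n ⊆ A n := fun n => subset_closure
  have hAC : ∀ n, A n ⊆ C := by
    intro n
    apply closure_minimal _ hCclosed
    rintro y ⟨m, _, rfl⟩
    exact hDC (hxD m)
  -- a point in all the A n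
  have hz : ∃ z, ∀ n, z ∈ A n := by
    by_contra h
    push_neg at h
    obtain ⟨F, hFsub, hFfin, hFun⟩ :=
      hcc (Set.range fun n => (A n)ᶜ) (Set.countable_range _)
        (by rintro U ⟨n, rfl⟩; exact (isClosed_closure).isOpen_compl)
        (by
          apply Set.eq_univ_of_forall
          intro z
          obtain ⟨n, hn⟩ := h z
          exact ⟨(A n)ᶜ, ⟨n, rfl⟩, hn⟩)
    have hgex : ∀ U : Set X, ∃ n, U ∈ F → U = (A n)ᶜ := by
      intro U
      by_cases hU : U ∈ F
      · obtain ⟨n, hn⟩ := hFsub hU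
        exact ⟨n, fun _ => hn.symm⟩
      · exact ⟨0, fun h' => absurd h' hU⟩
    choose g hg using hgex
    set N := hFfin.toFinset.sup g with hN
    have : x N ∈ ⋃₀ F := hFun ▸ Set.mem_univ _
    obtain ⟨U, hUF, hxU⟩ := this
    have hgN : g U ≤ N := Finset.le_sup (hFfin.mem_toFinset.mpr hUF)
    have : x N ∈ A (g U) := hTA _ ⟨N, hgN, rfl⟩
    rw [hg U hUF] at hxU
    exact hxU this
  obtain ⟨z, hz⟩ := hz
  -- z ∈ C, so z ∈ O for some O ∈ 𝒪
  obtain ⟨O, hO𝒪, hzO⟩ := hCsub (hAC 0 (hz 0))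
  have hOopen := h𝒪 O hO𝒪
  -- O meets every tail
  have hmeet : ∀ n, ∃ m, n ≤ m ∧ x m ∈ O := by
    intro n
    have := (mem_closure_iff.mp (hz n)) O hOopen hzO
    obtain ⟨y, hyO, m, hm, rfl⟩ := this
    exact ⟨m, hm, hyO⟩
  obtain ⟨m₀, _, hm₀O⟩ := hmeet 0
  obtain ⟨m₁, hm₁, hm₁O⟩ := hmeet (m₀ + 1)
  have : x m₀ = x m₁ := hOne O hO𝒪 _ (hxD m₀) hm₀O _ (hxD m₁) hm₁O
  exact absurd (hxinj this) (by omega)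
end
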